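/- arXiv:1412.4809 — 4 statements merged into one kernel-verified Lean document; each statement's English description precedes it below -/
import Mathlib

section
/- Let S_k(A) denote the k-th elementary symmetric function of the eigenvalues of an n×n matrix A, viewed as a polynomial function of the entries of A. At a diagonal matrix A the derivatives of S_k are: ∂_{ij}S_k(A) = S_{k−1;i}(A) if i = j and 0 otherwise; and for the second derivatives, ∂_{ij}∂_{rs}S_k(A) = S_{k−2;i,r}(A) if i = j, r = s and i ≠ r; ∂_{ij}∂_{rs}S_k(A) = −S_{k−2;i,j}(A) if i ≠ j, r = j and s = i; and ∂_{ij}∂_{rs}S_k(A) = 0 in every other case. -/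
/-- The `k`-th elementary symmetric polynomial of `λ_1, …, λ_n`, with the convention that
`S_k = 0` for `k < 0` (in particular `S_{-1} = 0`) and `S_0 = 1`. -/
noncomputable def esymZ (n : ℕ) (k : ℤ) (lam : Fin n → ℝ) : ℝ :=
  if 0 ≤ k then ∑ t ∈ Finset.powersetCard k.toNat Finset.univ, ∏ i ∈ t, lam i else 0

/-- `S_k(A)` for an `n × n` matrix `A`: the `k`-th elementary symmetric function of the
eigenvalues of `A`, i.e. the coefficient of `(-x)^(n-k)` in `det (A - x I)`, viewed as a
polynomial function of the entries of `A`. -/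
noncomputable def SmatR (n : ℕ) (k : ℤ) (A : Matrix (Fin n) (Fin n) ℝ) : ℝ :=
  if 0 ≤ k ∧ k ≤ (n : ℤ) then (-1 : ℝ) ^ k.toNat * (Matrix.charpoly A).coeff (n - k.toNat)
  else 0

/-- `∂_{ij} G (A)`: the partial derivative of a function `G` of a matrix with respect to the
`(i,j)` entry, at the matrix `A`. -/
noncomputable def pd (n : ℕ) (G : Matrix (Fin n) (Fin n) ℝ → ℝ) (i j : Fin n)
    (A : Matrix (Fin n) (Fin n) ℝ) : ℝ :=
  deriv (fun t : ℝ => G (A + t • Matrix.single i j 1)) 0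

/-- `∂_{ij} ∂_{rs} G (A)`: the second partial derivative with respect to the `(r,s)` entry and
then the `(i,j)` entry. -/
noncomputable def pd2 (n : ℕ) (G : Matrix (Fin n) (Fin n) ℝ → ℝ) (i j r s : Fin n)
    (A : Matrix (Fin n) (Fin n) ℝ) : ℝ :=
  pd n (fun B => pd n G r s B) i j A

open Matrix Polynomial Finset Function

set_option linter.unusedSectionVars false
set_option linter.unusedTactic false
set_option linter.unreachableTactic false
set_option linter.unusedVariables false

variable {n : ℕ} {R : Type*} [CommRing R]

lemma sum_pcard_update (lam : Fin n → ℝ) (s : Finset (Fin n)) (i : Fin n) (his : i ∈ s)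
    (c : ℝ) (k : ℕ) :
    ∑ t ∈ Finset.powersetCard (k+1) s, ∏ m ∈ t, Function.update lam i c m
      = (∑ t ∈ Finset.powersetCard (k+1) (s.erase i), ∏ m ∈ t, lam m)
        + c * ∑ t ∈ Finset.powersetCard k (s.erase i), ∏ m ∈ t, lam m := by
  have key : ∀ (m' : ℕ) (t : Finset (Fin n)), t ∈ Finset.powersetCard m' (s.erase i) → i ∉ t := by
    intro m' t ht h
    exact (Finset.notMem_erase i s) ((Finset.mem_powersetCard.mp ht).1 h)
  conv_lhs => rw [← Finset.insert_erase his, Finset.powersetCard_succ_insert (Finset.notMem_erase i _)]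
  rw [Finset.sum_union]
  · congr 1
    · exact Finset.sum_congr rfl fun t ht => Finset.prod_congr rfl fun m hm =>
        Function.update_of_ne (fun h => key _ t ht (by rwa [h] at hm)) _ _
    · rw [Finset.sum_image, Finset.mul_sum]
      · refine Finset.sum_congr rfl fun t ht => ?_
        rw [Finset.prod_insert (key _ t ht), Function.update_self]
        congr 1
        exact Finset.prod_congr rfl fun m hm =>
          Function.update_of_ne (fun h => key _ t ht (by rwa [h] at hm)) _ _
      · intro t ht t' ht' hins
        have := congrArg (Finset.erase · i) hins
        simpa [Finset.erase_insert (key _ t ht), Finset.erase_insert (key _ t' ht')] using this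
  · rw [Finset.disjoint_right]
    intro t ht ht'
    obtain ⟨t', htm, rfl⟩ := Finset.mem_image.mp ht
    exact key _ _ ht' (Finset.mem_insert_self i t')

lemma sum_update_zero (lam : Fin n → ℝ) (s : Finset (Fin n)) (i : Fin n) (his : i ∈ s) (k : ℕ) :
    ∑ t ∈ Finset.powersetCard k s, ∏ m ∈ t, Function.update lam i 0 m
      = ∑ t ∈ Finset.powersetCard k (s.erase i), ∏ m ∈ t, lam m := by
  cases k with
  | zero => simp
  | succ k => rw [sum_pcard_update lam s i his 0 k]; ring

lemma esymZ_ofNat (k : ℕ) (lam : Fin n → ℝ) :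
    esymZ n k lam = ∑ t ∈ Finset.powersetCard k Finset.univ, ∏ i ∈ t, lam i := by
  simp [esymZ]

lemma esymZ_neg {k : ℤ} (hk : k < 0) (lam : Fin n → ℝ) : esymZ n k lam = 0 := by
  simp [esymZ, not_le.mpr hk]

lemma esymZ_update_zero (k : ℕ) (lam : Fin n → ℝ) (i : Fin n) :
    esymZ n k (Function.update lam i 0)
      = ∑ t ∈ Finset.powersetCard k (Finset.univ.erase i), ∏ m ∈ t, lam m := by
  rw [esymZ_ofNat, sum_update_zero lam Finset.univ i (Finset.mem_univ i) k]

lemma esymZ_update (k : ℤ) (lam : Fin n → ℝ) (i : Fin n) (c : ℝ) :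
    esymZ n k (Function.update lam i c)
      = esymZ n k (Function.update lam i 0) + c * esymZ n (k-1) (Function.update lam i 0) := by
  by_cases hk : 0 ≤ k
  · obtain ⟨m, rfl⟩ := Int.eq_ofNat_of_zero_le hk
    cases m with
    | zero =>
      have h1 : ((0:ℕ):ℤ) - 1 < 0 := by norm_num
      rw [esymZ_neg h1]
      simp [esymZ]
    | succ m =>
      have h1 : ((m+1:ℕ):ℤ) - 1 = ((m:ℕ):ℤ) := by push_cast; ring
      rw [h1, esymZ_ofNat, esymZ_ofNat, esymZ_ofNat,
        sum_pcard_update lam Finset.univ i (Finset.mem_univ i) c m,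
        sum_update_zero lam Finset.univ i (Finset.mem_univ i),
        sum_update_zero lam Finset.univ i (Finset.mem_univ i)]
  · push_neg at hk
    rw [esymZ_neg hk, esymZ_neg hk, esymZ_neg (by omega)]
    ring



lemma detRow1 (d : Fin n → R) (i j : Fin n) (h : j ≠ i) (a : R) :
    Matrix.det (Matrix.updateRow (Matrix.diagonal d) i (Pi.single j a)) = 0 := by
  apply Matrix.det_eq_zero_of_column_eq_zero i
  intro m
  by_cases hm : m = i
  · subst hm; rw [Matrix.updateRow_self, Pi.single_eq_of_ne (Ne.symm h)]
  · rw [Matrix.updateRow_ne hm, Matrix.diagonal_apply_ne _ hm]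

lemma updRow_comm (M : Matrix (Fin n) (Fin n) R) {i r : Fin n} (h : i ≠ r)
    (v w : Fin n → R) :
    Matrix.updateRow (Matrix.updateRow M i v) r w
      = Matrix.updateRow (Matrix.updateRow M r w) i v := by
  ext m l
  by_cases h1 : m = r
  · subst h1; rw [Matrix.updateRow_self, Matrix.updateRow_ne (Ne.symm h), Matrix.updateRow_self]
  · by_cases h2 : m = i
    · subst h2; rw [Matrix.updateRow_ne h1, Matrix.updateRow_self, Matrix.updateRow_self]
    · rw [Matrix.updateRow_ne h1, Matrix.updateRow_ne h2, Matrix.updateRow_ne h2,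
        Matrix.updateRow_ne h1]

lemma detRow2_zero (d : Fin n → R) (i j r s : Fin n) (hir : i ≠ r) (hji : j ≠ i) (hsr : s ≠ r)
    (hno : ¬(j = r ∧ s = i)) (a b : R) :
    Matrix.det (Matrix.updateRow (Matrix.updateRow (Matrix.diagonal d) i (Pi.single j a)) r
      (Pi.single s b)) = 0 := by
  by_cases hsi : s = i
  · have hjr : j ≠ r := fun h => hno ⟨h, hsi⟩
    apply Matrix.det_eq_zero_of_column_eq_zero r
    intro m
    by_cases hm : m = r
    · subst hm; rw [Matrix.updateRow_self, Pi.single_eq_of_ne (Ne.symm hsr)]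
    · rw [Matrix.updateRow_ne hm]
      by_cases hm2 : m = i
      · subst hm2; rw [Matrix.updateRow_self, Pi.single_eq_of_ne (Ne.symm hjr)]
      · rw [Matrix.updateRow_ne hm2, Matrix.diagonal_apply_ne _ hm]
  · apply Matrix.det_eq_zero_of_column_eq_zero i
    intro m
    by_cases hm : m = r
    · subst hm; rw [Matrix.updateRow_self, Pi.single_eq_of_ne (Ne.symm hsi)]
    · rw [Matrix.updateRow_ne hm]
      by_cases hm2 : m = i
      · subst hm2; rw [Matrix.updateRow_self, Pi.single_eq_of_ne (Ne.symm hji)]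
      · rw [Matrix.updateRow_ne hm2, Matrix.diagonal_apply_ne _ hm2]

lemma detRow2_swap (d : Fin n → R) (i j : Fin n) (hij : i ≠ j) (a b : R) :
    Matrix.det (Matrix.updateRow (Matrix.updateRow (Matrix.diagonal d) i (Pi.single j a)) j
      (Pi.single i b))
      = -(a * b) * ∏ m ∈ (Finset.univ.erase j).erase i, d m := by
  set dd : Fin n → R := Function.update (Function.update d j a) i b with hdd
  have hM : Matrix.updateRow (Matrix.updateRow (Matrix.diagonal d) i (Pi.single j a)) j
      (Pi.single i b) = (Matrix.diagonal dd).submatrix (Equiv.swap i j) id := by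
    ext m l
    rw [Matrix.submatrix_apply, id]
    by_cases h1 : m = j
    · subst h1
      rw [Matrix.updateRow_self, Equiv.swap_apply_right]
      by_cases h2 : l = i
      · subst h2; simp [hdd, Matrix.diagonal_apply_eq, Pi.single_eq_same]
      · rw [Pi.single_eq_of_ne h2, Matrix.diagonal_apply_ne _ (Ne.symm h2)]
    · by_cases h2 : m = i
      · subst h2
        rw [Matrix.updateRow_ne h1, Matrix.updateRow_self, Equiv.swap_apply_left]
        by_cases h3 : l = j
        · subst h3; simp [hdd, Function.update_of_ne (Ne.symm hij), Pi.single_eq_same]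
        · rw [Pi.single_eq_of_ne h3, Matrix.diagonal_apply_ne _ (Ne.symm h3)]
      · rw [Matrix.updateRow_ne h1, Matrix.updateRow_ne h2,
          Equiv.swap_apply_of_ne_of_ne h2 h1]
        by_cases h3 : m = l
        · subst h3
          rw [Matrix.diagonal_apply_eq, Matrix.diagonal_apply_eq, hdd,
            Function.update_of_ne h2, Function.update_of_ne h1]
        · rw [Matrix.diagonal_apply_ne _ h3, Matrix.diagonal_apply_ne _ h3]
  rw [hM, Matrix.det_permute, Matrix.det_diagonal, Equiv.Perm.sign_swap hij]
  have h1 : ∏ m, dd m = dd i * (dd j * ∏ m ∈ (Finset.univ.erase i).erase j, dd m) := by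
    rw [Finset.mul_prod_erase _ _ (Finset.mem_erase.mpr ⟨Ne.symm hij, Finset.mem_univ j⟩),
      Finset.mul_prod_erase _ _ (Finset.mem_univ i)]
  have h2 : ∏ m ∈ (Finset.univ.erase i).erase j, dd m
      = ∏ m ∈ (Finset.univ.erase j).erase i, d m := by
    have hee : (Finset.univ.erase i).erase j = (Finset.univ.erase j).erase i := by
      ext x; simp only [Finset.mem_erase, Finset.mem_univ, and_true]; tauto
    rw [hee]
    apply Finset.prod_congr rfl
    intro m hm
    have h := Finset.mem_erase.mp hm
    rw [hdd, Function.update_of_ne h.1, Function.update_of_ne (Finset.mem_erase.mp h.2).1]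
  have hdi : dd i = b := by rw [hdd]; simp
  have hdj : dd j = a := by rw [hdd, Function.update_of_ne (Ne.symm hij)]; simp
  rw [h1, h2, hdi, hdj]
  push_cast
  ring


lemma charm_entry (d : Fin n → ℝ) (i j r s : Fin n) (t u : ℝ)
    (m l : Fin n) :
    charmatrix (Matrix.diagonal d + t • Matrix.single i j 1
        + u • Matrix.single r s 1) m l
      = (if m = l then (X:ℝ[X]) - C (d m) else 0) + (if i = m ∧ j = l then -C t else 0)
        + (if r = m ∧ s = l then -C u else 0) := by
  by_cases hml : m = l
  · subst hml
    rw [charmatrix_apply_eq]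
    simp only [Matrix.add_apply, Matrix.smul_apply, Matrix.single, Matrix.of_apply,
      Matrix.diagonal_apply_eq, smul_eq_mul, mul_ite, mul_one, mul_zero, if_pos rfl]
    split_ifs
    all_goals try (simp only [zero_add, add_zero, map_add, map_zero]; try ring)
    all_goals exfalso
    all_goals casesm* _ ∧ _
    all_goals subst_vars
    all_goals simp_all
  · rw [charmatrix_apply_ne _ _ _ hml]
    simp only [Matrix.add_apply, Matrix.smul_apply, Matrix.single, Matrix.of_apply,
      Matrix.diagonal_apply_ne _ hml, smul_eq_mul, mul_ite, mul_one, mul_zero, if_neg hml]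
    split_ifs
    all_goals try (simp only [zero_add, add_zero, map_add, map_zero]; try ring)
    all_goals exfalso
    all_goals casesm* _ ∧ _
    all_goals subst_vars
    all_goals simp_all


lemma if_and_eq (i m j l : Fin n) (a : R) :
    (if i = m ∧ j = l then a else 0) = if m = i then (if l = j then a else 0) else 0 := by
  by_cases h1 : m = i
  · by_cases h2 : l = j
    · rw [if_pos ⟨h1.symm, h2.symm⟩, if_pos h1, if_pos h2]
    · rw [if_neg (fun h => h2 h.2.symm), if_pos h1, if_neg h2]
  · rw [if_neg (fun h => h1 h.1.symm), if_neg h1]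

lemma upd1_entry (f : Fin n → R) (i j s : Fin n) (a b : R) (m l : Fin n) :
    Matrix.updateRow (Matrix.diagonal f) i
        (Matrix.diagonal f i + Pi.single j a + Pi.single s b) m l
      = (if m = l then f m else 0) + (if m = i then (if l = j then a else 0) else 0)
        + (if m = i then (if l = s then b else 0) else 0) := by
  by_cases hmi : m = i
  · subst hmi
    rw [Matrix.updateRow_self]
    simp only [Pi.add_apply, Matrix.diagonal_apply, Pi.single_apply, eq_self_iff_true, if_true]
  · rw [Matrix.updateRow_ne hmi, if_neg hmi, if_neg hmi, Matrix.diagonal_apply, add_zero, add_zero]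

lemma upd2_entry (f : Fin n → R) (i j r s : Fin n) (hir : i ≠ r) (a b : R) (m l : Fin n) :
    Matrix.updateRow (Matrix.updateRow (Matrix.diagonal f) i
        (Matrix.diagonal f i + Pi.single j a)) r (Matrix.diagonal f r + Pi.single s b) m l
      = (if m = l then f m else 0) + (if m = i then (if l = j then a else 0) else 0)
        + (if m = r then (if l = s then b else 0) else 0) := by
  by_cases hmr : m = r
  · subst hmr
    rw [Matrix.updateRow_self, if_neg (Ne.symm hir)]
    simp only [Pi.add_apply, Matrix.diagonal_apply, Pi.single_apply, eq_self_iff_true, if_true,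
      add_zero, zero_add]
  · rw [Matrix.updateRow_ne hmr, if_neg hmr, add_zero]
    by_cases hmi : m = i
    · subst hmi
      rw [Matrix.updateRow_self]
      simp only [Pi.add_apply, Matrix.diagonal_apply, Pi.single_apply, eq_self_iff_true, if_true]
    · rw [Matrix.updateRow_ne hmi, if_neg hmi, Matrix.diagonal_apply, add_zero]

lemma charpoly_perturb (d : Fin n → ℝ) (i j r s : Fin n) (hij : i ≠ j) (hrs : r ≠ s) (t u : ℝ) :
    Matrix.charpoly (Matrix.diagonal d + t • Matrix.single i j 1
        + u • Matrix.single r s 1)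
      = (∏ m, ((X:ℝ[X]) - C (d m)))
        - (if r = j ∧ s = i then
            C t * C u * ∏ m ∈ (Finset.univ.erase j).erase i, ((X:ℝ[X]) - C (d m))
          else 0) := by
  classical
  set f : Fin n → ℝ[X] := fun m => X - C (d m) with hf
  have hdet : Matrix.det (Matrix.diagonal f) = ∏ m, f m := Matrix.det_diagonal
  rw [Matrix.charpoly]
  by_cases hir : i = r
  · subst hir
    have hM : charmatrix (Matrix.diagonal d + t • Matrix.single i j 1
        + u • Matrix.single i s 1)
        = Matrix.updateRow (Matrix.diagonal f) i
            (Matrix.diagonal f i + Pi.single j (-C t) + Pi.single s (-C u)) := by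
      ext m l
      rw [charm_entry d i j i s t u m l, upd1_entry, if_and_eq, if_and_eq]
    rw [hM, Matrix.det_updateRow_add, Matrix.det_updateRow_add, Matrix.updateRow_eq_self,
      detRow1 f i j (Ne.symm hij), detRow1 f i s (Ne.symm hrs), hdet,
      if_neg (fun h : i = j ∧ s = i => hij h.1)]
    ring
  · have hM : charmatrix (Matrix.diagonal d + t • Matrix.single i j 1
        + u • Matrix.single r s 1)
        = Matrix.updateRow (Matrix.updateRow (Matrix.diagonal f) i
            (Matrix.diagonal f i + Pi.single j (-C t))) r
            (Matrix.diagonal f r + Pi.single s (-C u)) := by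
      ext m l
      rw [charm_entry d i j r s t u m l, upd2_entry f i j r s hir, if_and_eq, if_and_eq]
    have hAr : (Matrix.updateRow (Matrix.diagonal f) i
        (Matrix.diagonal f i + Pi.single j (-C t))) r = Matrix.diagonal f r :=
      Matrix.updateRow_ne (Ne.symm hir)
    have hDi : (Matrix.updateRow (Matrix.diagonal f) r (Pi.single s (-C u))) i
        = Matrix.diagonal f i := Matrix.updateRow_ne hir
    rw [hM, Matrix.det_updateRow_add, ← hAr, Matrix.updateRow_eq_self,
      Matrix.det_updateRow_add, Matrix.updateRow_eq_self, detRow1 f i j (Ne.symm hij),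
      updRow_comm _ hir, Matrix.det_updateRow_add, ← hDi, Matrix.updateRow_eq_self,
      detRow1 f r s (Ne.symm hrs), ← updRow_comm _ hir]
    by_cases hc : r = j ∧ s = i
    · rw [hc.1, hc.2, detRow2_swap f i j hij (-C t) (-C u), hdet, if_pos ⟨rfl, rfl⟩]
      ring
    · rw [detRow2_zero f i j r s hir (Ne.symm hij) (Ne.symm hrs)
        (fun h => hc ⟨h.1.symm, h.2⟩), hdet, if_neg hc]
      ring


lemma coeffProd (s : Finset (Fin n)) (r : Fin n → ℝ) {k : ℕ} (h : k ≤ s.card) :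
    (∏ i ∈ s, (X - C (r i))).coeff k
      = (-1)^(s.card - k) * ∑ t ∈ s.powersetCard (s.card - k), ∏ i ∈ t, r i := by
  have h1 : ∀ i, ((X:ℝ[X]) - C (r i)) = (X + C ((-r) i)) := by intro i; simp [sub_eq_add_neg]
  simp only [h1]
  rw [Finset.prod_X_add_C_coeff s (-r) h, Finset.mul_sum]
  apply Finset.sum_congr rfl
  intro t ht
  have hc : t.card = s.card - k := (Finset.mem_powersetCard.mp ht).2
  have : ∏ i ∈ t, (-r) i = (-1)^t.card * ∏ i ∈ t, r i := by
    rw [← Finset.prod_const, ← Finset.prod_mul_distrib]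
    exact Finset.prod_congr rfl fun i _ => by simp
  rw [this, hc]

lemma SmatR_coeff (k : ℕ) (hk : k ≤ n) (A : Matrix (Fin n) (Fin n) ℝ) :
    SmatR n k A = (-1:ℝ)^k * (Matrix.charpoly A).coeff (n - k) := by
  rw [SmatR, if_pos ⟨Int.ofNat_nonneg k, by exact_mod_cast hk⟩]
  simp

lemma coeff_full (k : ℕ) (hk : k ≤ n) (μ : Fin n → ℝ) :
    (-1:ℝ)^k * (∏ m, ((X:ℝ[X]) - C (μ m))).coeff (n - k) = esymZ n k μ := by
  have hcard : (Finset.univ : Finset (Fin n)).card = n := by simp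
  rw [coeffProd Finset.univ μ (by omega), hcard]
  have h2 : n - (n - k) = k := by omega
  rw [h2, ← mul_assoc, ← pow_add]
  rw [Even.neg_one_pow ⟨k, by ring⟩, one_mul, esymZ_ofNat]

lemma esymZ_sub2 (k : ℕ) (lam : Fin n → ℝ) (i j : Fin n) (hij : i ≠ j) (h2 : 2 ≤ k) :
    esymZ n ((k:ℤ) - 2) (Function.update (Function.update lam i 0) j 0)
      = ∑ t ∈ Finset.powersetCard (k-2) ((Finset.univ.erase j).erase i), ∏ m ∈ t, lam m := by
  have hcast : ((k:ℤ) - 2) = ((k - 2 : ℕ) : ℤ) := by omega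
  rw [hcast, esymZ_ofNat,
    sum_update_zero (Function.update lam i 0) Finset.univ j (Finset.mem_univ j),
    sum_update_zero lam (Finset.univ.erase j) i
      (Finset.mem_erase.mpr ⟨hij, Finset.mem_univ i⟩)]

lemma coeff_sub2 (k : ℕ) (hk : k ≤ n) (lam : Fin n → ℝ) (i j : Fin n) (hij : i ≠ j) :
    (-1:ℝ)^k * (∏ m ∈ (Finset.univ.erase j).erase i, ((X:ℝ[X]) - C (lam m))).coeff (n - k)
      = esymZ n ((k:ℤ) - 2) (Function.update (Function.update lam i 0) j 0) := by
  have hn2 : 2 ≤ n := by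
    have h := Fintype.one_lt_card_iff_nontrivial.mpr ⟨⟨i, j, hij⟩⟩
    exact (by simpa using h : 1 < n)
  have hcard : ((Finset.univ.erase j).erase i).card = n - 2 := by
    rw [Finset.card_erase_of_mem (Finset.mem_erase.mpr ⟨hij, Finset.mem_univ i⟩),
      Finset.card_erase_of_mem (Finset.mem_univ j)]
    simp; omega
  by_cases h2 : 2 ≤ k
  · rw [coeffProd _ lam (by omega), hcard]
    have he : n - 2 - (n - k) = k - 2 := by omega
    rw [he, ← mul_assoc, ← pow_add, Even.neg_one_pow ⟨k - 1, by omega⟩, one_mul,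
      esymZ_sub2 k lam i j hij h2]
  · have hdeg : (∏ m ∈ (Finset.univ.erase j).erase i, ((X:ℝ[X]) - C (lam m))).natDegree < n - k := by
      calc (∏ m ∈ (Finset.univ.erase j).erase i, ((X:ℝ[X]) - C (lam m))).natDegree
          ≤ ∑ m ∈ (Finset.univ.erase j).erase i, ((X:ℝ[X]) - C (lam m)).natDegree :=
            Polynomial.natDegree_prod_le _ _
        _ ≤ n - 2 := by
            rw [← hcard]
            refine le_trans (Finset.sum_le_card_nsmul _ _ 1
              (fun x _ => le_of_eq (Polynomial.natDegree_X_sub_C _))) ?_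
            simp
        _ < n - k := by omega
    rw [Polynomial.coeff_eq_zero_of_natDegree_lt hdeg, mul_zero,
      esymZ_neg (by omega) _]

lemma charpoly_diag (d : Fin n → ℝ) :
    Matrix.charpoly (Matrix.diagonal d) = ∏ m, ((X:ℝ[X]) - C (d m)) := by
  rw [Matrix.charpoly]
  have h : charmatrix (Matrix.diagonal d) = Matrix.diagonal (fun m => (X:ℝ[X]) - C (d m)) := by
    ext a b
    by_cases h : a = b
    · subst h; simp
    · simp [charmatrix_apply_ne _ _ _ h, Matrix.diagonal_apply_ne _ h]
  rw [h, Matrix.det_diagonal]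

lemma SmatR_diag (k : ℕ) (hk : k ≤ n) (μ : Fin n → ℝ) :
    SmatR n k (Matrix.diagonal μ) = esymZ n k μ := by
  rw [SmatR_coeff k hk, charpoly_diag, coeff_full k hk]

lemma SmatR_perturb (k : ℕ) (hk : k ≤ n) (lam : Fin n → ℝ) (i j r s : Fin n)
    (hij : i ≠ j) (hrs : r ≠ s) (t u : ℝ) :
    SmatR n k (Matrix.diagonal lam + t • Matrix.single i j 1
        + u • Matrix.single r s 1)
      = esymZ n k lam - (if r = j ∧ s = i then
          t * u * esymZ n ((k:ℤ) - 2) (Function.update (Function.update lam i 0) j 0)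
        else 0) := by
  rw [SmatR_coeff k hk, charpoly_perturb lam i j r s hij hrs t u, Polynomial.coeff_sub,
    mul_sub, coeff_full k hk]
  congr 1
  split_ifs with h
  · rw [← Polynomial.C_mul, Polynomial.coeff_C_mul]
    have : (-1:ℝ)^k * (t * u *
        (∏ m ∈ (Finset.univ.erase j).erase i, ((X:ℝ[X]) - C (lam m))).coeff (n - k))
        = t * u * ((-1:ℝ)^k *
        (∏ m ∈ (Finset.univ.erase j).erase i, ((X:ℝ[X]) - C (lam m))).coeff (n - k)) := by ring
    rw [this, coeff_sub2 k hk lam i j hij]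
  · simp

lemma deriv_aff (a b : ℝ) (x : ℝ) : deriv (fun t : ℝ => a + t * b) x = b := by
  have h := ((hasDerivAt_id x).mul_const b).const_add a
  simpa using h.deriv

lemma diag_absorb (μ : Fin n → ℝ) (r : Fin n) (c : ℝ) :
    Matrix.diagonal μ + c • Matrix.single r r 1
      = Matrix.diagonal (Function.update μ r (μ r + c)) := by
  ext a b
  rw [Matrix.add_apply, Matrix.smul_apply]
  by_cases hab : a = b
  · subst hab
    rw [Matrix.diagonal_apply_eq, Matrix.diagonal_apply_eq]
    by_cases har : a = r
    · subst har
      rw [Function.update_self, Matrix.single_apply_same]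
      simp
    · rw [Function.update_of_ne har,
        Matrix.single_apply_of_ne r r 1 a a (fun h => har h.1.symm)]
      simp
  · rw [Matrix.diagonal_apply_ne _ hab, Matrix.diagonal_apply_ne _ hab,
      Matrix.single_apply_of_ne r r 1 a b (fun h => hab (h.1.symm.trans h.2))]
    simp

lemma pd_eq (G : Matrix (Fin n) (Fin n) ℝ → ℝ) (i j : Fin n) (A : Matrix (Fin n) (Fin n) ℝ) :
    pd n G i j A = deriv (fun t : ℝ => G (A + t • Matrix.single i j 1)) 0 := rfl

lemma pd2_eq (G : Matrix (Fin n) (Fin n) ℝ → ℝ) (i j r s : Fin n)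
    (A : Matrix (Fin n) (Fin n) ℝ) :
    pd2 n G i j r s A
      = deriv (fun t : ℝ => pd n G r s (A + t • Matrix.single i j 1)) 0 := rfl

lemma pd_diag_same (k : ℕ) (hk : k ≤ n) (μ : Fin n → ℝ) (i : Fin n) :
    pd n (SmatR n (k:ℤ)) i i (Matrix.diagonal μ)
      = esymZ n ((k:ℤ) - 1) (Function.update μ i 0) := by
  rw [pd_eq]
  have hfun : (fun t : ℝ => SmatR n (k:ℤ) (Matrix.diagonal μ + t • Matrix.single i i 1))
      = fun t : ℝ => (esymZ n k (Function.update μ i 0)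
          + μ i * esymZ n ((k:ℤ) - 1) (Function.update μ i 0))
          + t * esymZ n ((k:ℤ) - 1) (Function.update μ i 0) := by
    funext t
    rw [diag_absorb, SmatR_diag k hk, esymZ_update (k:ℤ) μ i (μ i + t)]
    ring
  rw [hfun, deriv_aff]

lemma pd_offdiag_diag (k : ℕ) (hk : k ≤ n) (lam : Fin n → ℝ) (i j : Fin n) (hij : i ≠ j) :
    pd n (SmatR n (k:ℤ)) i j (Matrix.diagonal lam) = 0 := by
  rw [pd_eq]
  have hfun : (fun t : ℝ => SmatR n (k:ℤ) (Matrix.diagonal lam + t • Matrix.single i j 1))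
      = fun _ : ℝ => esymZ n k lam := by
    funext t
    have h0 : Matrix.diagonal lam + t • Matrix.single i j 1
        = Matrix.diagonal lam + t • Matrix.single i j 1
          + (0:ℝ) • Matrix.single i j 1 := by
      rw [zero_smul, add_zero]
    rw [h0, SmatR_perturb k hk lam i j i j hij hij t 0,
      if_neg (fun h : i = j ∧ j = i => hij h.1), sub_zero]
  rw [hfun, deriv_const]

lemma pd_same_perturb (k : ℕ) (hk : k ≤ n) (μ : Fin n → ℝ) (r i j : Fin n) (hij : i ≠ j)
    (t : ℝ) :
    pd n (SmatR n (k:ℤ)) r r (Matrix.diagonal μ + t • Matrix.single i j 1)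
      = esymZ n ((k:ℤ) - 1) (Function.update μ r 0) := by
  rw [pd_eq]
  have hfun : (fun u : ℝ => SmatR n (k:ℤ)
      (Matrix.diagonal μ + t • Matrix.single i j 1 + u • Matrix.single r r 1))
      = fun u : ℝ => (esymZ n k (Function.update μ r 0)
          + μ r * esymZ n ((k:ℤ) - 1) (Function.update μ r 0))
          + u * esymZ n ((k:ℤ) - 1) (Function.update μ r 0) := by
    funext u
    have h0 : Matrix.diagonal μ + t • Matrix.single i j 1
          + u • Matrix.single r r 1
        = Matrix.diagonal (Function.update μ r (μ r + u)) + t • Matrix.single i j 1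
          + (0:ℝ) • Matrix.single i j 1 := by
      rw [zero_smul, add_zero, ← diag_absorb]
      abel
    rw [h0, SmatR_perturb k hk _ i j i j hij hij t 0,
      if_neg (fun h : i = j ∧ j = i => hij h.1), sub_zero,
      esymZ_update (k:ℤ) μ r (μ r + u)]
    ring
  rw [hfun, deriv_aff]

lemma pd_offdiag_perturb (k : ℕ) (hk : k ≤ n) (lam : Fin n → ℝ) (i j r s : Fin n)
    (hij : i ≠ j) (hrs : r ≠ s) (t : ℝ) :
    pd n (SmatR n (k:ℤ)) r s (Matrix.diagonal lam + t • Matrix.single i j 1)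
      = if r = j ∧ s = i then
          -(t * esymZ n ((k:ℤ) - 2) (Function.update (Function.update lam i 0) j 0))
        else 0 := by
  rw [pd_eq]
  have hfun : (fun u : ℝ => SmatR n (k:ℤ)
      (Matrix.diagonal lam + t • Matrix.single i j 1 + u • Matrix.single r s 1))
      = fun u : ℝ => esymZ n k lam + u * (if r = j ∧ s = i then
          -(t * esymZ n ((k:ℤ) - 2) (Function.update (Function.update lam i 0) j 0))
        else 0) := by
    funext u
    rw [SmatR_perturb k hk lam i j r s hij hrs t u]
    split_ifs with h
    · ring
    · ring
  rw [hfun, deriv_aff]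

/-- The derivatives of `S_k` at a diagonal matrix `A`:
`∂_{ij} S_k(A) = S_{k-1;i}(A)` if `i = j` and `0` otherwise, and
`∂_{ij}∂_{rs} S_k(A) = S_{k-2;i,r}(A)` if `i = j`, `r = s`, `i ≠ r`;
`= -S_{k-2;i,j}(A)` if `i ≠ j`, `r = j`, `s = i`; and `= 0` in every other case. -/
theorem statement0 (n k : ℕ) (hk : k ≤ n) (lam : Fin n → ℝ) :
    (∀ i j : Fin n,
      pd n (SmatR n (k : ℤ)) i j (Matrix.diagonal lam) =
        if i = j then esymZ n ((k : ℤ) - 1) (Function.update lam i 0) else 0) ∧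
    (∀ i j r s : Fin n,
      pd2 n (SmatR n (k : ℤ)) i j r s (Matrix.diagonal lam) =
        if i = j ∧ r = s ∧ i ≠ r then
          esymZ n ((k : ℤ) - 2) (Function.update (Function.update lam i 0) r 0)
        else if i ≠ j ∧ r = j ∧ s = i then
          -esymZ n ((k : ℤ) - 2) (Function.update (Function.update lam i 0) j 0)
        else 0) := by
  constructor
  · intro i j
    by_cases hij : i = j
    · subst hij
      rw [if_pos rfl, pd_diag_same k hk lam i]
    · rw [if_neg hij, pd_offdiag_diag k hk lam i j hij]
  · intro i j r s
    rw [pd2_eq]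
    by_cases hij : i = j
    · subst hij
      by_cases hrs : r = s
      · subst hrs
        by_cases hir : i = r
        · subst hir
          have hfun : (fun t : ℝ => pd n (SmatR n (k:ℤ)) i i
              (Matrix.diagonal lam + t • Matrix.single i i 1))
              = fun _ : ℝ => esymZ n ((k:ℤ) - 1) (Function.update lam i 0) := by
            funext t
            rw [diag_absorb, pd_diag_same k hk _ i, Function.update_idem]
          rw [hfun, deriv_const,
            if_neg (fun h : i = i ∧ i = i ∧ i ≠ i => h.2.2 rfl),
            if_neg (fun h : i ≠ i ∧ i = i ∧ i = i => h.1 rfl)]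
        · have hfun : (fun t : ℝ => pd n (SmatR n (k:ℤ)) r r
              (Matrix.diagonal lam + t • Matrix.single i i 1))
              = fun t : ℝ => (esymZ n ((k:ℤ) - 1) (Function.update (Function.update lam r 0) i 0)
                  + lam i * esymZ n ((k:ℤ) - 1 - 1) (Function.update (Function.update lam r 0) i 0))
                  + t * esymZ n ((k:ℤ) - 1 - 1) (Function.update (Function.update lam r 0) i 0) := by
            funext t
            rw [diag_absorb, pd_diag_same k hk _ r,
              show Function.update (Function.update lam i (lam i + t)) r 0
                  = Function.update (Function.update lam r 0) i (lam i + t) from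
                Function.update_comm hir _ _ _,
              esymZ_update ((k:ℤ) - 1) (Function.update lam r 0) i (lam i + t)]
            ring
          rw [hfun, deriv_aff, if_pos ⟨rfl, rfl, hir⟩]
          rw [show ((k:ℤ) - 1 - 1) = (k:ℤ) - 2 by ring,
            show Function.update (Function.update lam i 0) r 0
                = Function.update (Function.update lam r 0) i 0 from
              Function.update_comm hir _ _ _]
      · have hfun : (fun t : ℝ => pd n (SmatR n (k:ℤ)) r s
            (Matrix.diagonal lam + t • Matrix.single i i 1))
            = fun _ : ℝ => (0:ℝ) := by
          funext t
          rw [diag_absorb, pd_offdiag_diag k hk _ r s hrs]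
        rw [hfun, deriv_const,
          if_neg (fun h : i = i ∧ r = s ∧ i ≠ r => hrs h.2.1),
          if_neg (fun h : i ≠ i ∧ r = i ∧ s = i => h.1 rfl)]
    · by_cases hrs : r = s
      · subst hrs
        have hfun : (fun t : ℝ => pd n (SmatR n (k:ℤ)) r r
            (Matrix.diagonal lam + t • Matrix.single i j 1))
            = fun _ : ℝ => esymZ n ((k:ℤ) - 1) (Function.update lam r 0) := by
          funext t
          rw [pd_same_perturb k hk lam r i j hij t]
        rw [hfun, deriv_const,
          if_neg (fun h : i = j ∧ r = r ∧ i ≠ r => hij h.1),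
          if_neg (fun h : i ≠ j ∧ r = j ∧ r = i => hij (h.2.2.symm.trans h.2.1))]
      · have hfun : (fun t : ℝ => pd n (SmatR n (k:ℤ)) r s
            (Matrix.diagonal lam + t • Matrix.single i j 1))
            = fun t : ℝ => 0 + t * (if r = j ∧ s = i then
                -(esymZ n ((k:ℤ) - 2) (Function.update (Function.update lam i 0) j 0))
              else 0) := by
          funext t
          rw [pd_offdiag_perturb k hk lam i j r s hij hrs t]
          split_ifs with h
          · ring
          · ring
        rw [hfun, deriv_aff,
          if_neg (fun h : i = j ∧ r = s ∧ i ≠ r => hij h.1)]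
        by_cases h : r = j ∧ s = i
        · rw [if_pos h, if_pos ⟨hij, h.1, h.2⟩]
        · rw [if_neg h, if_neg (fun hh => h ⟨hh.2.1, hh.2.2⟩)]
end

section
/- For 0 ≤ k ≤ n let F(A) = S_k(A^{−1}) = S_{n−k}(A)/S_n(A), a function of invertible n×n matrices A. At a diagonal matrix A with nonzero eigenvalues λ_1,…,λ_n the derivatives of F are: ∂_{ij}F(A) = −S_{n−k;i}(A)/(λ_i S_n(A)) if i = j and 0 otherwise; for i ≠ j, ∂_{ii}∂_{jj}F(A) = S_{n−k;i,j}(A)/(λ_i λ_j S_n(A)); for i ≠ j, ∂_{ij}∂_{ji}F(A) = (S_{n−k;i}(A) + λ_i S_{n−k−1;i,j}(A))/(λ_i λ_j S_n(A)); ∂_{ii}∂_{ii}F(A) = 2 S_{n−k;i}(A)/(λ_i² S_n(A)); and all other second derivatives ∂_{ij}∂_{rs}F(A) vanish. -/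
/-- The inverse `σ_k` operator `F(A) = S_k(A⁻¹) = S_{n-k}(A) / S_n(A)`. -/
noncomputable def FinvR (n k : ℕ) (A : Matrix (Fin n) (Fin n) ℝ) : ℝ :=
  SmatR n ((n : ℤ) - k) A / SmatR n (n : ℤ) A

namespace SAux
open Finset Polynomial Matrix Equiv

variable {n : ℕ}



lemma filter_not_mem_powersetCard (q : ℕ) (s : Finset (Fin n)) (i : Fin n) :
    (s.powersetCard q).filter (fun t => i ∉ t) = (s.erase i).powersetCard q := by
  ext t
  simp only [Finset.mem_filter, Finset.mem_powersetCard, Finset.subset_erase]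
  tauto

lemma sum_update_erase (f : Fin n → ℝ) (i : Fin n) (q : ℕ) (s : Finset (Fin n)) :
    ∑ t ∈ s.powersetCard q, ∏ l ∈ t, Function.update f i 0 l
      = ∑ t ∈ (s.erase i).powersetCard q, ∏ l ∈ t, f l := by
  rw [← filter_not_mem_powersetCard]
  rw [← Finset.sum_filter_of_ne (p := fun t => i ∉ t)
    (fun t _ hne => by
      by_contra hit
      exact hne (Finset.prod_eq_zero hit (Function.update_self i 0 f)))]
  refine Finset.sum_congr rfl fun t ht => Finset.prod_congr rfl fun l hl => ?_
  have : l ≠ i := by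
    rcases Finset.mem_filter.mp ht with ⟨-, hnot⟩
    exact fun h => hnot (h ▸ hl)
  simp [Function.update_of_ne this]

lemma esymZ_upd1 (f : Fin n → ℝ) (i : Fin n) (m : ℤ) :
    esymZ n m (Function.update f i 0)
      = if 0 ≤ m then ∑ t ∈ (Finset.univ.erase i).powersetCard m.toNat, ∏ l ∈ t, f l else 0 := by
  unfold esymZ
  split
  · rw [sum_update_erase]
  · rfl

lemma esymZ_upd2 (f : Fin n → ℝ) (i j : Fin n) (m : ℤ) :
    esymZ n m (Function.update (Function.update f i 0) j 0)
      = if 0 ≤ m then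
          ∑ t ∈ ((Finset.univ.erase j).erase i).powersetCard m.toNat, ∏ l ∈ t, f l
        else 0 := by
  unfold esymZ
  split
  · rw [sum_update_erase, sum_update_erase]
  · rfl

lemma sum_powersetCard_split (g : Fin n → ℝ) (i : Fin n) (q : ℕ) :
    ∑ t ∈ Finset.powersetCard (q+1) (Finset.univ : Finset (Fin n)), ∏ l ∈ t, g l
      = ∑ t ∈ (Finset.univ.erase i).powersetCard (q+1), ∏ l ∈ t, g l
        + g i * ∑ t ∈ (Finset.univ.erase i).powersetCard q, ∏ l ∈ t, g l := by
  have h0 : (Finset.univ : Finset (Fin n)) = insert i (Finset.univ.erase i) :=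
    (Finset.insert_erase (Finset.mem_univ i)).symm
  conv_lhs => rw [h0, Finset.powersetCard_succ_insert (Finset.notMem_erase i _)]
  rw [Finset.sum_union]
  · congr 1
    rw [Finset.sum_image (fun t ht t' ht' h => by
      have hit : i ∉ t := fun hh =>
        (Finset.mem_erase.mp ((Finset.mem_powersetCard.mp ht).1 hh)).1 rfl
      have hit' : i ∉ t' := fun hh =>
        (Finset.mem_erase.mp ((Finset.mem_powersetCard.mp ht').1 hh)).1 rfl
      rw [← Finset.erase_insert hit, h, Finset.erase_insert hit'])]
    rw [Finset.mul_sum]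
    refine Finset.sum_congr rfl fun t ht => ?_
    have hit : i ∉ t := fun hh =>
      (Finset.mem_erase.mp ((Finset.mem_powersetCard.mp ht).1 hh)).1 rfl
    rw [Finset.prod_insert hit]
  · rw [Finset.disjoint_left]
    intro t ht htim
    have hit : i ∉ t := fun hh =>
      (Finset.mem_erase.mp ((Finset.mem_powersetCard.mp ht).1 hh)).1 rfl
    rcases Finset.mem_image.mp htim with ⟨u, -, rfl⟩
    exact hit (Finset.mem_insert_self i u)

lemma esymZ_update (f : Fin n → ℝ) (i : Fin n) (a : ℝ) (m : ℤ) :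
    esymZ n m (Function.update f i a)
      = esymZ n m (Function.update f i 0) + a * esymZ n (m - 1) (Function.update f i 0) := by
  rcases lt_trichotomy m 0 with hm | rfl | hm
  · rw [esymZ, if_neg (by omega), esymZ, if_neg (by omega), esymZ, if_neg (by omega)]
    ring
  · rw [esymZ, if_pos le_rfl, esymZ, if_pos le_rfl, esymZ, if_neg (by omega)]
    simp
  · obtain ⟨q, rfl⟩ : ∃ q : ℕ, m = (q : ℤ) + 1 := ⟨(m - 1).toNat, by omega⟩
    rw [esymZ_upd1, if_pos (by omega), esymZ_upd1, if_pos (by omega)]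
    have h1 : ((q : ℤ) + 1).toNat = q + 1 := by omega
    have h2 : ((q : ℤ) + 1 - 1).toNat = q := by omega
    rw [h1, h2, esymZ, if_pos (by omega), h1, sum_powersetCard_split (Function.update f i a) i q]
    have hv : Function.update f i a i = a := Function.update_self i a f
    have hc : ∀ s : Finset (Fin n), ∀ r : ℕ,
        ∑ t ∈ ((Finset.univ.erase i)).powersetCard r, ∏ l ∈ t, Function.update f i a l
          = ∑ t ∈ ((Finset.univ.erase i)).powersetCard r, ∏ l ∈ t, f l := by
      intro s r
      refine Finset.sum_congr rfl fun t ht => Finset.prod_congr rfl fun l hl => ?_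
      have hsub := (Finset.mem_powersetCard.mp ht).1
      have : l ≠ i := fun h => (Finset.mem_erase.mp (hsub hl)).1 h
      simp [Function.update_of_ne this]
    rw [hv, hc Finset.univ, hc Finset.univ]

lemma esymZ_self (f : Fin n → ℝ) (i : Fin n) (m : ℤ) :
    esymZ n m f
      = esymZ n m (Function.update f i 0) + f i * esymZ n (m - 1) (Function.update f i 0) := by
  conv_lhs => rw [← Function.update_eq_self i f]
  exact esymZ_update f i (f i) m

lemma esymZ_top (f : Fin n → ℝ) : esymZ n (n : ℤ) f = ∏ l, f l := by
  rw [esymZ, if_pos (by omega)]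
  have : ((n : ℤ).toNat) = (Finset.univ : Finset (Fin n)).card := by simp
  rw [this, Finset.powersetCard_self, Finset.sum_singleton]

lemma esymZ_upd1_zero (f : Fin n → ℝ) (i : Fin n) (m : ℤ) (hm : (n : ℤ) - 1 < m) :
    esymZ n m (Function.update f i 0) = 0 := by
  have hn : 0 < n := i.pos
  rw [esymZ_upd1, if_pos (by omega)]
  have hcard : (Finset.univ.erase i).card = n - 1 := by
    rw [Finset.card_erase_of_mem (Finset.mem_univ i)]; simp
  have he : (Finset.univ.erase i).powersetCard m.toNat = ∅ :=
    Finset.powersetCard_eq_empty.mpr (by omega)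
  rw [he, Finset.sum_empty]

lemma esymZ_upd2_zero (f : Fin n → ℝ) (i j : Fin n) (hij : i ≠ j) (m : ℤ)
    (hm : (n : ℤ) - 2 < m) :
    esymZ n m (Function.update (Function.update f i 0) j 0) = 0 := by
  have hn : 2 ≤ n := by
    have h1 := i.isLt; have h2 := j.isLt
    have h3 : i.val ≠ j.val := fun h => hij (Fin.ext h)
    omega
  rw [esymZ_upd2, if_pos (by omega)]
  have hcard : ((Finset.univ.erase j).erase i).card = n - 2 := by
    rw [Finset.card_erase_of_mem (Finset.mem_erase.mpr ⟨hij, Finset.mem_univ i⟩),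
      Finset.card_erase_of_mem (Finset.mem_univ j)]
    simp
    omega
  have he : ((Finset.univ.erase j).erase i).powersetCard m.toNat = ∅ :=
    Finset.powersetCard_eq_empty.mpr (by omega)
  rw [he, Finset.sum_empty]




lemma det_eq_prod_diag {R : Type*} [CommRing R] (M : Matrix (Fin n) (Fin n) R) (i j r s : Fin n)
    (hij : i ≠ j) (hrs : r ≠ s) (hne : ¬(r = j ∧ s = i))
    (h : ∀ a b, a ≠ b → ¬(a = i ∧ b = j) → ¬(a = r ∧ b = s) → M a b = 0) :
    M.det = ∏ l, M l l := by
  rw [Matrix.det_apply]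
  rw [Finset.sum_eq_single (1 : Equiv.Perm (Fin n))]
  · simp
  · intro σ _ hσ1
    have hz : ∏ l, M (σ l) l = 0 := by
      by_contra hp
      have hfac : ∀ l, M (σ l) l ≠ 0 := fun l h0 =>
        hp (Finset.prod_eq_zero (Finset.mem_univ l) h0)
      have key : ∀ l, σ l ≠ l → (σ l = i ∧ l = j) ∨ (σ l = r ∧ l = s) := by
        intro l hl
        by_contra hc
        exact hfac l (h _ _ hl (fun hx => hc (Or.inl hx)) (fun hx => hc (Or.inr hx)))
      obtain ⟨l0, hl0⟩ : ∃ l, σ l ≠ l := by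
        by_contra hall; push_neg at hall; exact hσ1 (Equiv.ext hall)
      rcases key l0 hl0 with ⟨hs0, rfl⟩ | ⟨hs0, rfl⟩
      · -- σ j = i
        have hσi : σ i ≠ i := fun hh => hij (σ.injective (hh.trans hs0.symm))
        rcases key i hσi with ⟨h1, h2⟩ | ⟨h1, h2⟩
        · exact hij h2
        · -- σ i = r, i = s
          have hσr : σ r = r := by
            by_contra hr
            rcases key r hr with ⟨k1, k2⟩ | ⟨k1, k2⟩
            · exact hne ⟨k2, h2.symm⟩
            · exact hrs k2
          have hir : i = r := σ.injective (h1.trans hσr.symm)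
          exact hσi (by rw [hir, hσr])
      · -- σ s = r
        have hσr : σ r ≠ r := fun hh => hrs (σ.injective (hh.trans hs0.symm))
        rcases key r hσr with ⟨h1, h2⟩ | ⟨h1, h2⟩
        · -- σ r = i, r = j
          have hσi : σ i = i := by
            by_contra hi
            rcases key i hi with ⟨k1, k2⟩ | ⟨k1, k2⟩
            · exact hi k1
            · exact hne ⟨h2, k2.symm⟩
          have hri : r = i := σ.injective (h1.trans hσi.symm)
          exact hσr (by rw [hri, hσi])
        · exact hrs h2
    rw [hz, smul_zero]
  · intro h1; exact absurd (Finset.mem_univ _) h1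

lemma det_pair {R : Type*} [CommRing R] (M : Matrix (Fin n) (Fin n) R) (i j : Fin n) (hij : i ≠ j)
    (h : ∀ a b, a ≠ b → ¬(a = i ∧ b = j) → ¬(a = j ∧ b = i) → M a b = 0) :
    M.det = ∏ l, M l l
      - M i j * M j i * ∏ l ∈ (Finset.univ.erase j).erase i, M l l := by
  classical
  have h1s : (1 : Equiv.Perm (Fin n)) ≠ Equiv.swap i j := by
    intro hh
    have := DFunLike.congr_fun hh i
    simp [Equiv.swap_apply_left] at this
    exact hij this
  rw [Matrix.det_apply]
  rw [← Finset.sum_subset (Finset.subset_univ ({1, Equiv.swap i j} : Finset (Equiv.Perm (Fin n))))]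
  · rw [Finset.sum_pair h1s]
    have hswap : ∏ l, M (Equiv.swap i j l) l
        = M i j * (M j i * ∏ l ∈ (Finset.univ.erase j).erase i, M l l) := by
      rw [← Finset.mul_prod_erase Finset.univ (fun l => M (Equiv.swap i j l) l)
        (Finset.mem_univ j)]
      rw [← Finset.mul_prod_erase (Finset.univ.erase j) (fun l => M (Equiv.swap i j l) l)
        (Finset.mem_erase.mpr ⟨hij, Finset.mem_univ i⟩)]
      rw [Equiv.swap_apply_right, Equiv.swap_apply_left]
      congr 1
      congr 1
      refine Finset.prod_congr rfl fun l hl => ?_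
      have hli : l ≠ i := (Finset.mem_erase.mp hl).1
      have hlj : l ≠ j := (Finset.mem_erase.mp (Finset.mem_erase.mp hl).2).1
      rw [Equiv.swap_apply_of_ne_of_ne hli hlj]
    rw [hswap, Equiv.Perm.sign_swap hij]
    simp only [Equiv.Perm.sign_one, one_smul, Equiv.Perm.one_apply]
    have : (-1 : ℤˣ) • (M i j * (M j i * ∏ l ∈ (Finset.univ.erase j).erase i, M l l))
        = -(M i j * (M j i * ∏ l ∈ (Finset.univ.erase j).erase i, M l l)) := by
      simp
    rw [this]
    ring
  · intro σ _ hσ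
    simp only [Finset.mem_insert, Finset.mem_singleton] at hσ
    push_neg at hσ
    obtain ⟨hσ1, hσsw⟩ := hσ
    have hz : ∏ l, M (σ l) l = 0 := by
      by_contra hp
      have hfac : ∀ l, M (σ l) l ≠ 0 := fun l h0 =>
        hp (Finset.prod_eq_zero (Finset.mem_univ l) h0)
      have key : ∀ l, σ l ≠ l → (σ l = i ∧ l = j) ∨ (σ l = j ∧ l = i) := by
        intro l hl
        by_contra hc
        exact hfac l (h _ _ hl (fun hx => hc (Or.inl hx)) (fun hx => hc (Or.inr hx)))
      have hfix : ∀ l, l ≠ i → l ≠ j → σ l = l := by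
        intro l hli hlj
        by_contra hl
        rcases key l hl with ⟨-, h2⟩ | ⟨-, h2⟩
        · exact hlj h2
        · exact hli h2
      by_cases hσi : σ i = i
      · by_cases hσj : σ j = j
        · exact hσ1 (Equiv.ext fun x => by
            by_cases hx1 : x = i
            · subst hx1; simpa using hσi
            · by_cases hx2 : x = j
              · subst hx2; simpa using hσj
              · simpa using hfix x hx1 hx2)
        · rcases key j hσj with ⟨h1, -⟩ | ⟨h1, h2⟩
          · exact hij (σ.injective (hσi.trans h1.symm))
          · exact hσj h1
      · rcases key i hσi with ⟨h1, h2⟩ | ⟨h1, -⟩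
        · exact hij h2
        · -- σ i = j
          have hσj : σ j ≠ j := fun hh => hij (σ.injective (h1.trans hh.symm))
          rcases key j hσj with ⟨h3, -⟩ | ⟨h3, h4⟩
          · -- σ j = i
            exact hσsw (Equiv.ext fun x => by
              by_cases hx1 : x = i
              · subst hx1; rw [Equiv.swap_apply_left]; exact h1
              · by_cases hx2 : x = j
                · subst hx2; rw [Equiv.swap_apply_right]; exact h3
                · rw [Equiv.swap_apply_of_ne_of_ne hx1 hx2]; exact hfix x hx1 hx2)
          · exact hij h4.symm
    rw [hz, smul_zero]




lemma esymZ_gt (f : Fin n → ℝ) (m : ℤ) (hm : (n : ℤ) < m) : esymZ n m f = 0 := by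
  rw [esymZ, if_pos (by omega)]
  have hcard : (Finset.univ : Finset (Fin n)).card = n := by simp
  have he : (Finset.univ : Finset (Fin n)).powersetCard m.toNat = ∅ :=
    Finset.powersetCard_eq_empty.mpr (by omega)
  rw [he, Finset.sum_empty]

lemma coeff_prod_sub (s : Finset (Fin n)) (g : Fin n → ℝ) (q : ℕ) (hq : q ≤ s.card) :
    (∏ l ∈ s, (X - C (g l))).coeff (s.card - q)
      = (-1 : ℝ) ^ q * ∑ t ∈ s.powersetCard q, ∏ l ∈ t, g l := by
  have h1 : ∏ l ∈ s, (X - C (g l)) = ((s.val.map g).map fun t => X - C t).prod := by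
    rw [Finset.prod_eq_multiset_prod, Multiset.map_map]
    rfl
  have hcard : Multiset.card (s.val.map g) = s.card := by simp
  have h2 := Multiset.prod_X_sub_C_coeff (s.val.map g)
    (k := s.card - q) (by rw [hcard]; omega)
  rw [h1, h2, hcard]
  have h3 : s.card - (s.card - q) = q := by omega
  rw [h3, Finset.esymm_map_val]

lemma natDegree_prod_X_sub_C (s : Finset (Fin n)) (g : Fin n → ℝ) :
    (∏ l ∈ s, (X - C (g l))).natDegree = s.card := by
  rw [Polynomial.natDegree_prod_of_monic _ _ (fun l _ => monic_X_sub_C (g l))]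
  simp

lemma SmatR_eq_esymZ (A : Matrix (Fin n) (Fin n) ℝ) (d : Fin n → ℝ)
    (h : A.charpoly = ∏ l, (X - C (d l))) (m : ℤ) : SmatR n m A = esymZ n m d := by
  by_cases hm : 0 ≤ m ∧ m ≤ (n : ℤ)
  · rw [SmatR, if_pos hm, h]
    have hcard : (Finset.univ : Finset (Fin n)).card = n := by simp
    have hq : m.toNat ≤ (Finset.univ : Finset (Fin n)).card := by omega
    have := coeff_prod_sub Finset.univ d m.toNat hq
    rw [hcard] at this
    rw [this, esymZ, if_pos hm.1, ← mul_assoc, ← mul_pow]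
    norm_num
  · rw [SmatR, if_neg hm]
    rcases (by omega : m < 0 ∨ (n : ℤ) < m) with hm' | hm'
    · rw [esymZ, if_neg (by omega)]
    · rw [esymZ_gt d m hm']

lemma SmatR_pair (A : Matrix (Fin n) (Fin n) ℝ) (d : Fin n → ℝ) (i j : Fin n)
    (hij : i ≠ j) (c : ℝ)
    (h : A.charpoly = ∏ l, (X - C (d l))
      - C c * ∏ l ∈ (Finset.univ.erase j).erase i, (X - C (d l)))
    (m : ℤ) (hm : m ≤ (n : ℤ)) :
    SmatR n m A
      = esymZ n m d - c * esymZ n (m - 2) (Function.update (Function.update d i 0) j 0) := by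
  have hn : 2 ≤ n := by
    have h1 := i.isLt; have h2 := j.isLt
    have h3 : i.val ≠ j.val := fun hh => hij (Fin.ext hh)
    omega
  have hcard2 : ((Finset.univ.erase j).erase i).card = n - 2 := by
    rw [Finset.card_erase_of_mem (Finset.mem_erase.mpr ⟨hij, Finset.mem_univ i⟩),
      Finset.card_erase_of_mem (Finset.mem_univ j)]
    simp
    omega
  by_cases hm0 : 0 ≤ m
  · rw [SmatR, if_pos ⟨hm0, hm⟩, h, coeff_sub, coeff_C_mul]
    have hcard : (Finset.univ : Finset (Fin n)).card = n := by simp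
    have h1 := coeff_prod_sub Finset.univ d m.toNat (by omega)
    rw [hcard] at h1
    rw [h1]
    by_cases hm2 : 2 ≤ m
    · have h2 := coeff_prod_sub ((Finset.univ.erase j).erase i) d (m.toNat - 2)
        (by omega)
      rw [hcard2] at h2
      have harg : n - 2 - (m.toNat - 2) = n - m.toNat := by omega
      rw [harg] at h2
      rw [h2, esymZ, if_pos hm0, esymZ_upd2, if_pos (by omega)]
      have htn : (m - 2).toNat = m.toNat - 2 := by omega
      rw [htn]
      have hpow : (-1 : ℝ) ^ m.toNat * (-1 : ℝ) ^ (m.toNat - 2) * ((-1 : ℝ) ^ 2) = 1 := by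
        rw [mul_assoc, ← pow_add]
        have : m.toNat - 2 + 2 = m.toNat := by omega
        rw [this, ← mul_pow]
        norm_num
      have hpow2 : (-1 : ℝ) ^ m.toNat * (-1 : ℝ) ^ (m.toNat - 2) = 1 := by
        have := hpow; rwa [neg_one_sq, mul_one] at this
      have hpowm : (-1 : ℝ) ^ m.toNat * (-1 : ℝ) ^ m.toNat = 1 := by
        rw [← mul_pow]; norm_num
      have hre : (-1 : ℝ) ^ m.toNat * ((-1 : ℝ) ^ m.toNat * (∑ t ∈ Finset.powersetCard m.toNat Finset.univ, ∏ l ∈ t, d l)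
            - c * ((-1 : ℝ) ^ (m.toNat - 2) * ∑ t ∈ ((Finset.univ.erase j).erase i).powersetCard (m.toNat - 2), ∏ l ∈ t, d l))
          = ((-1 : ℝ) ^ m.toNat * (-1 : ℝ) ^ m.toNat) * (∑ t ∈ Finset.powersetCard m.toNat Finset.univ, ∏ l ∈ t, d l)
            - ((-1 : ℝ) ^ m.toNat * (-1 : ℝ) ^ (m.toNat - 2)) * (c * ∑ t ∈ ((Finset.univ.erase j).erase i).powersetCard (m.toNat - 2), ∏ l ∈ t, d l) := by
        ring
      rw [hre, hpow2, hpowm]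
      ring
    · have hdeg : (∏ l ∈ (Finset.univ.erase j).erase i, (X - C (d l))).natDegree < n - m.toNat := by
        rw [natDegree_prod_X_sub_C, hcard2]; omega
      have hpowm : (-1 : ℝ) ^ m.toNat * (-1 : ℝ) ^ m.toNat = 1 := by
        rw [← mul_pow]; norm_num
      rw [Polynomial.coeff_eq_zero_of_natDegree_lt hdeg, esymZ, if_pos hm0,
        esymZ, if_neg (by omega), mul_zero, sub_zero, sub_zero, ← mul_assoc, hpowm, one_mul]
  · rw [SmatR, if_neg (by omega), esymZ, if_neg (by omega), esymZ, if_neg (by omega)]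
    ring




lemma stdBasis_apply (i j a b : Fin n) (c : ℝ) :
    Matrix.single i j c a b = if i = a ∧ j = b then c else 0 := rfl

lemma entry2 (d : Fin n → ℝ) (i j r s a b : Fin n) (t u : ℝ) :
    ((Matrix.diagonal d + t • Matrix.single i j (1 : ℝ)
        + u • Matrix.single r s (1 : ℝ)) : Matrix (Fin n) (Fin n) ℝ) a b
      = Matrix.diagonal d a b + (if i = a ∧ j = b then t else 0)
          + (if r = a ∧ s = b then u else 0) := by
  simp only [Matrix.add_apply, Matrix.smul_apply, stdBasis_apply, smul_ite, smul_eq_mul,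
    mul_one, mul_zero]
  split_ifs <;> ring

lemma diag_add_std (d : Fin n → ℝ) (i : Fin n) (c : ℝ) :
    Matrix.diagonal d + c • Matrix.single i i 1
      = Matrix.diagonal (Function.update d i (d i + c)) := by
  ext a b
  simp only [Matrix.add_apply, Matrix.smul_apply, stdBasis_apply, smul_ite, smul_eq_mul,
    mul_one, mul_zero]
  by_cases hab : a = b
  · subst hab
    by_cases hia : i = a
    · subst hia
      simp [Function.update_self]
    · have hai : a ≠ i := fun h => hia h.symm
      simp [Function.update_of_ne hai, hia]
  · have h1 : ¬(i = a ∧ i = b) := fun ⟨x1, x2⟩ => hab (x1.symm.trans x2)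
    simp [Matrix.diagonal_apply_ne _ hab, h1]

lemma charpoly_two_offdiag (d : Fin n → ℝ) (i j r s : Fin n) (hij : i ≠ j) (hrs : r ≠ s)
    (hne : ¬(r = j ∧ s = i)) (t u : ℝ) :
    (Matrix.diagonal d + t • Matrix.single i j 1
        + u • Matrix.single r s 1).charpoly = ∏ l, (X - C (d l)) := by
  set A := Matrix.diagonal d + t • Matrix.single i j 1 + u • Matrix.single r s 1
    with hA
  have hdiag : ∀ l, A l l = d l := by
    intro l
    rw [hA, entry2, Matrix.diagonal_apply_eq]
    have h1 : ¬(i = l ∧ j = l) := fun ⟨h1, h2⟩ => hij (h1.trans h2.symm)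
    have h2 : ¬(r = l ∧ s = l) := fun ⟨h1, h2⟩ => hrs (h1.trans h2.symm)
    rw [if_neg h1, if_neg h2]; ring
  have hoff : ∀ a b, a ≠ b → ¬(a = i ∧ b = j) → ¬(a = r ∧ b = s) → A a b = 0 := by
    intro a b hab h1 h2
    rw [hA, entry2, Matrix.diagonal_apply_ne _ hab]
    rw [if_neg (fun ⟨x1, x2⟩ => h1 ⟨x1.symm, x2.symm⟩), if_neg (fun ⟨x1, x2⟩ => h2 ⟨x1.symm, x2.symm⟩)]
    ring
  have hcm : ∀ a b, a ≠ b → ¬(a = i ∧ b = j) → ¬(a = r ∧ b = s) →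
      (Matrix.charmatrix A) a b = 0 := by
    intro a b hab h1 h2
    rw [Matrix.charmatrix_apply_ne _ _ _ hab, hoff a b hab h1 h2, map_zero, neg_zero]
  have := det_eq_prod_diag (Matrix.charmatrix A) i j r s hij hrs hne hcm
  rw [Matrix.charpoly, this]
  refine Finset.prod_congr rfl fun l _ => ?_
  rw [Matrix.charmatrix_apply_eq, hdiag l]

lemma charpoly_one_offdiag (d : Fin n → ℝ) (i j : Fin n) (hij : i ≠ j) (t : ℝ) :
    (Matrix.diagonal d + t • Matrix.single i j 1).charpoly = ∏ l, (X - C (d l)) := by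
  have := charpoly_two_offdiag d i j i j hij hij (fun ⟨h1, _⟩ => hij h1) t 0
  rw [zero_smul, add_zero] at this
  exact this

lemma charpoly_cycle (d : Fin n → ℝ) (i j : Fin n) (hij : i ≠ j) (t u : ℝ) :
    (Matrix.diagonal d + t • Matrix.single i j 1
        + u • Matrix.single j i 1).charpoly
      = ∏ l, (X - C (d l))
        - C (t * u) * ∏ l ∈ (Finset.univ.erase j).erase i, (X - C (d l)) := by
  set A := Matrix.diagonal d + t • Matrix.single i j 1 + u • Matrix.single j i 1
    with hA
  have hdiag : ∀ l, A l l = d l := by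
    intro l
    rw [hA, entry2, Matrix.diagonal_apply_eq]
    have h1 : ¬(i = l ∧ j = l) := fun ⟨h1, h2⟩ => hij (h1.trans h2.symm)
    have h2 : ¬(j = l ∧ i = l) := fun ⟨h1, h2⟩ => hij (h2.trans h1.symm)
    rw [if_neg h1, if_neg h2]; ring
  have hAij : A i j = t := by
    rw [hA, entry2, Matrix.diagonal_apply_ne _ hij, if_pos ⟨rfl, rfl⟩,
      if_neg (fun ⟨h1, h2⟩ => hij h1.symm)]
    ring
  have hAji : A j i = u := by
    rw [hA, entry2, Matrix.diagonal_apply_ne _ hij.symm, if_neg (fun ⟨h1, _⟩ => hij h1),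
      if_pos ⟨rfl, rfl⟩]
    ring
  have hcm : ∀ a b, a ≠ b → ¬(a = i ∧ b = j) → ¬(a = j ∧ b = i) →
      (Matrix.charmatrix A) a b = 0 := by
    intro a b hab h1 h2
    have hoff : A a b = 0 := by
      rw [hA, entry2, Matrix.diagonal_apply_ne _ hab,
        if_neg (fun ⟨x1, x2⟩ => h1 ⟨x1.symm, x2.symm⟩),
        if_neg (fun ⟨x1, x2⟩ => h2 ⟨x1.symm, x2.symm⟩)]
      ring
    rw [Matrix.charmatrix_apply_ne _ _ _ hab, hoff, map_zero, neg_zero]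
  have hdet := det_pair (Matrix.charmatrix A) i j hij hcm
  rw [Matrix.charpoly, hdet, Matrix.charmatrix_apply_ne _ _ _ hij,
    Matrix.charmatrix_apply_ne _ _ _ hij.symm, hAij, hAji]
  have h1 : ∀ (s : Finset (Fin n)), ∏ l ∈ s, Matrix.charmatrix A l l = ∏ l ∈ s, (X - C (d l)) :=
    fun s => Finset.prod_congr rfl fun l _ => by rw [Matrix.charmatrix_apply_eq, hdiag l]
  rw [h1, h1]
  congr 1
  rw [neg_mul_neg, ← Polynomial.C_mul]

lemma charpoly_diag (d : Fin n → ℝ) :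
    (Matrix.diagonal d).charpoly = ∏ l, (X - C (d l)) := by
  have hcm : ∀ a b : Fin n, a ≠ b → (Matrix.charmatrix (Matrix.diagonal d)) a b = 0 := by
    intro a b hab
    rw [Matrix.charmatrix_apply_ne _ _ _ hab, Matrix.diagonal_apply_ne _ hab, map_zero, neg_zero]
  have hch : Matrix.charmatrix (Matrix.diagonal d)
      = Matrix.diagonal (fun l => (X : Polynomial ℝ) - C (d l)) := by
    ext a b
    by_cases hab : a = b
    · subst hab
      rw [Matrix.charmatrix_apply_eq, Matrix.diagonal_apply_eq, Matrix.diagonal_apply_eq]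
    · rw [hcm a b hab, Matrix.diagonal_apply_ne _ hab]
  rw [Matrix.charpoly, hch, Matrix.det_diagonal]




lemma hasDerivAt_affine (x y : ℝ) : HasDerivAt (fun u : ℝ => x + u * y) y 0 := by
  simpa using ((hasDerivAt_id (0 : ℝ)).mul_const y).const_add x

lemma deriv_lin_div (p0 p1 q0 q1 : ℝ) (hq : q0 ≠ 0) :
    deriv (fun u : ℝ => (p0 + u * p1) / (q0 + u * q1)) 0 = (p1 * q0 - p0 * q1) / q0 ^ 2 := by
  have h3 : (fun u : ℝ => q0 + u * q1) 0 ≠ 0 := by simpa using hq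
  have := ((hasDerivAt_affine p0 p1).fun_div (hasDerivAt_affine q0 q1) h3).deriv
  rw [this]
  norm_num

lemma deriv_bilin_div (a b c d e f g h p q : ℝ) (hp : p ≠ 0) :
    deriv (fun t : ℝ =>
      ((a + t * b) * (c + t * d) - (e + t * f) * (g + t * h)) / (p + t * q) ^ 2) 0
      = ((b * c + a * d - f * g - e * h) * p - 2 * (a * c - e * g) * q) / p ^ 3 := by
  have hnum : HasDerivAt (fun t : ℝ => (a + t * b) * (c + t * d) - (e + t * f) * (g + t * h))
      ((b * c + a * d) - (f * g + e * h)) 0 := by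
    have := ((hasDerivAt_affine a b).mul (hasDerivAt_affine c d)).sub
      ((hasDerivAt_affine e f).mul (hasDerivAt_affine g h))
    exact this.congr_deriv (by ring)
  have hden : HasDerivAt (fun t : ℝ => (p + t * q) ^ 2) (2 * p * q) 0 := by
    have := (hasDerivAt_affine p q).pow 2
    exact this.congr_deriv (by norm_num <;> ring)
  have hval : (fun t : ℝ => (p + t * q) ^ 2) 0 ≠ 0 := by
    simpa using pow_ne_zero 2 hp
  have := (hnum.fun_div hden hval).deriv
  rw [this]
  have h0 : p + 0 * q = p := by ring
  rw [h0]
  field_simp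
  ring

lemma pd_eq_of_rat (G : Matrix (Fin n) (Fin n) ℝ → ℝ) (r s : Fin n)
    (A : Matrix (Fin n) (Fin n) ℝ) (p0 p1 q0 q1 : ℝ) (hq : q0 ≠ 0)
    (h : ∀ u : ℝ, G (A + u • Matrix.single r s 1) = (p0 + u * p1) / (q0 + u * q1)) :
    pd n G r s A = (p1 * q0 - p0 * q1) / q0 ^ 2 := by
  unfold pd
  simp only [h]
  exact deriv_lin_div p0 p1 q0 q1 hq

lemma pd_eq_const (G : Matrix (Fin n) (Fin n) ℝ → ℝ) (r s : Fin n)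
    (A : Matrix (Fin n) (Fin n) ℝ) (c : ℝ)
    (h : ∀ u : ℝ, G (A + u • Matrix.single r s 1) = c) :
    pd n G r s A = 0 := by
  unfold pd
  simp only [h]
  exact deriv_const 0 c

lemma FinvR_inv (k : ℕ) (hk : k ≤ n) (B : Matrix (Fin n) (Fin n) ℝ) (hB : IsUnit B.det) :
    FinvR n k B = SmatR n (k : ℤ) B⁻¹ := by
  have hdet : B.det ≠ 0 := hB.ne_zero
  have hmul : B⁻¹ * B = 1 := Matrix.nonsing_inv_mul B hB
  have hMM : (1 - (X : ℝ[X]) • (B⁻¹).map (C : ℝ → ℝ[X])) * B.map C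
      = B.map C - (X : ℝ[X]) • (1 : Matrix (Fin n) (Fin n) ℝ[X]) := by
    rw [sub_mul, one_mul, smul_mul_assoc, ← Matrix.map_mul, hmul,
      Matrix.map_one _ (map_zero C) (map_one C)]
  have h2 : B.map C - (X : ℝ[X]) • (1 : Matrix (Fin n) (Fin n) ℝ[X])
      = -(Matrix.charmatrix B) := by
    ext a b
    simp only [Matrix.sub_apply, Matrix.smul_apply, Matrix.one_apply, Matrix.map_apply,
      Matrix.charmatrix_apply, Matrix.neg_apply, Matrix.sub_apply, Matrix.diagonal_apply,
      smul_ite, smul_eq_mul, mul_one, mul_zero]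
    split_ifs <;> ring
  have hdet2 : Matrix.charpolyRev B⁻¹ * C B.det = C ((-1 : ℝ) ^ n) * B.charpoly := by
    have h1 := congrArg Matrix.det hMM
    have hBdet : (B.map (⇑(C : ℝ →+* ℝ[X]))).det = C B.det := by
      rw [RingHom.map_det, RingHom.mapMatrix_apply]
    rw [Matrix.det_mul, hBdet, h2, Matrix.det_neg] at h1
    rw [Matrix.charpolyRev, h1, Matrix.charpoly]
    congr 1
    simp
  have hrev : (Matrix.charpoly B⁻¹).reverse = Matrix.charpolyRev B⁻¹ :=
    Matrix.reverse_charpoly B⁻¹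
  have hnd : (Matrix.charpoly B⁻¹).natDegree = n := by
    rw [Matrix.charpoly_natDegree_eq_dim]
    simp
  have hcoeff : (Matrix.charpoly B⁻¹).coeff (n - k) * B.det
      = (-1 : ℝ) ^ n * (Matrix.charpoly B).coeff k := by
    have := congrArg (fun p => Polynomial.coeff p k) hdet2
    simp only [Polynomial.coeff_mul_C, Polynomial.coeff_C_mul] at this
    rw [← hrev] at this
    rwa [Polynomial.coeff_reverse, hnd, Polynomial.revAt_le hk] at this
  have hdenval : SmatR n (n : ℤ) B = B.det := by
    rw [SmatR, if_pos ⟨by omega, le_refl _⟩]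
    have h1 : ((n : ℤ)).toNat = n := by omega
    rw [h1, Nat.sub_self]
    rw [Matrix.det_eq_sign_charpoly_coeff]
    simp
  have hnum : SmatR n ((n : ℤ) - k) B = (-1 : ℝ) ^ (n - k) * (Matrix.charpoly B).coeff k := by
    rw [SmatR, if_pos ⟨by omega, by omega⟩]
    have h1 : ((n : ℤ) - k).toNat = n - k := by omega
    rw [h1]
    have h2 : n - (n - k) = k := by omega
    rw [h2]
  have hrhs : SmatR n (k : ℤ) B⁻¹ = (-1 : ℝ) ^ k * (Matrix.charpoly B⁻¹).coeff (n - k) := by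
    rw [SmatR, if_pos ⟨by omega, by omega⟩]
    have h1 : ((k : ℤ)).toNat = k := by omega
    rw [h1]
  rw [FinvR, hdenval, hnum, hrhs]
  have hc : (Matrix.charpoly B⁻¹).coeff (n - k)
      = (-1 : ℝ) ^ n * (Matrix.charpoly B).coeff k / B.det := by
    rw [eq_div_iff hdet]
    exact hcoeff
  rw [hc]
  have hsign : (-1 : ℝ) ^ (n - k) = (-1 : ℝ) ^ k * (-1 : ℝ) ^ n := by
    rw [← pow_add]
    have h3 : k + n = (n - k) + 2 * k := by omega
    rw [h3, pow_add, pow_mul]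
    norm_num
  rw [hsign]
  field_simp


end SAux

/-- Lemma 2.2: derivatives of the inverse `σ_k` operator `F(A) = S_k(A⁻¹) = S_{n-k}(A)/S_n(A)`
at a diagonal matrix `A` with nonzero eigenvalues `λ_1, …, λ_n`. -/
theorem statement1 (n k : ℕ) (hk : k ≤ n) (lam : Fin n → ℝ) (hlam : ∀ i, lam i ≠ 0) :
    -- `F(A) = S_k(A⁻¹)` on invertible matrices
    (∀ B : Matrix (Fin n) (Fin n) ℝ, IsUnit B.det → FinvR n k B = SmatR n (k : ℤ) B⁻¹) ∧
    -- first derivatives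
    (∀ i j : Fin n,
      pd n (FinvR n k) i j (Matrix.diagonal lam) =
        if i = j then
          -(esymZ n ((n : ℤ) - k) (Function.update lam i 0)) / (lam i * esymZ n (n : ℤ) lam)
        else 0) ∧
    -- `∂_{ii}∂_{jj} F(A)` for `i ≠ j`
    (∀ i j : Fin n, i ≠ j →
      pd2 n (FinvR n k) i i j j (Matrix.diagonal lam) =
        esymZ n ((n : ℤ) - k) (Function.update (Function.update lam i 0) j 0) /
          (lam i * lam j * esymZ n (n : ℤ) lam)) ∧
    -- `∂_{ij}∂_{ji} F(A)` for `i ≠ j`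
    (∀ i j : Fin n, i ≠ j →
      pd2 n (FinvR n k) i j j i (Matrix.diagonal lam) =
        (esymZ n ((n : ℤ) - k) (Function.update lam i 0) +
            lam i * esymZ n ((n : ℤ) - k - 1) (Function.update (Function.update lam i 0) j 0)) /
          (lam i * lam j * esymZ n (n : ℤ) lam)) ∧
    -- `∂_{ii}∂_{ii} F(A)`
    (∀ i : Fin n,
      pd2 n (FinvR n k) i i i i (Matrix.diagonal lam) =
        2 * esymZ n ((n : ℤ) - k) (Function.update lam i 0) /
          (lam i ^ 2 * esymZ n (n : ℤ) lam)) ∧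
    -- all other second derivatives vanish
    (∀ i j r s : Fin n, ¬(i = j ∧ r = s) → ¬(i ≠ j ∧ r = j ∧ s = i) →
      pd2 n (FinvR n k) i j r s (Matrix.diagonal lam) = 0) := by
  classical
  have hprodne : ∏ l, lam l ≠ 0 := Finset.prod_ne_zero_iff.mpr fun l _ => hlam l
  have hSntop : esymZ n (n : ℤ) lam = ∏ l, lam l := SAux.esymZ_top lam
  have hSnne : esymZ n (n : ℤ) lam ≠ 0 := by rw [hSntop]; exact hprodne
  have hmle : (n : ℤ) - (k : ℤ) ≤ (n : ℤ) := by omega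
  refine ⟨fun B hB => SAux.FinvR_inv k hk B hB, ?_, ?_, ?_, ?_, ?_⟩
  -- first derivatives
  · intro i j
    by_cases hij : i = j
    · subst hij
      rw [if_pos rfl]
      have hSin : esymZ n (n : ℤ) (Function.update lam i 0) = 0 :=
        SAux.esymZ_upd1_zero lam i (n : ℤ) (by omega)
      have hdn1 : esymZ n ((n : ℤ) - 1) (Function.update lam i 0) ≠ 0 := by
        intro h0
        apply hSnne
        rw [SAux.esymZ_self lam i (n : ℤ), hSin, h0, mul_zero, add_zero]
      have hpath : ∀ u : ℝ,
          FinvR n k (Matrix.diagonal lam + u • Matrix.single i i 1)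
            = (esymZ n ((n : ℤ) - k) lam
                + u * esymZ n ((n : ℤ) - k - 1) (Function.update lam i 0))
              / (esymZ n (n : ℤ) lam
                + u * esymZ n ((n : ℤ) - 1) (Function.update lam i 0)) := by
        intro u
        rw [SAux.diag_add_std lam i u]
        unfold FinvR
        rw [SAux.SmatR_eq_esymZ _ _ (SAux.charpoly_diag _) _,
          SAux.SmatR_eq_esymZ _ _ (SAux.charpoly_diag _) _,
          SAux.esymZ_update lam i (lam i + u) ((n : ℤ) - k),
          SAux.esymZ_update lam i (lam i + u) (n : ℤ),
          SAux.esymZ_self lam i ((n : ℤ) - k), SAux.esymZ_self lam i (n : ℤ)]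
        congr 1 <;> ring
      rw [SAux.pd_eq_of_rat (FinvR n k) i i (Matrix.diagonal lam) _ _ _ _ hSnne hpath,
        SAux.esymZ_self lam i ((n : ℤ) - k), SAux.esymZ_self lam i (n : ℤ), hSin]
      simp only [zero_add]
      field_simp [hlam i, hdn1]
      ring
    · rw [if_neg hij]
      refine SAux.pd_eq_const (FinvR n k) i j (Matrix.diagonal lam)
        (esymZ n ((n : ℤ) - k) lam / esymZ n (n : ℤ) lam) ?_
      intro u
      unfold FinvR
      rw [SAux.SmatR_eq_esymZ _ _ (SAux.charpoly_one_offdiag lam i j hij u) _,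
        SAux.SmatR_eq_esymZ _ _ (SAux.charpoly_one_offdiag lam i j hij u) _]
  -- ∂ii ∂jj
  · intro i j hij
    have hji : j ≠ i := Ne.symm hij
    have e1 : (n : ℤ) - (k : ℤ) - 1 - 1 = (n : ℤ) - (k : ℤ) - 2 := by ring
    have e2 : (n : ℤ) - 1 - 1 = (n : ℤ) - 2 := by ring
    have hczn : esymZ n (n : ℤ) (Function.update (Function.update lam j 0) i 0) = 0 :=
      SAux.esymZ_upd2_zero lam j i hji (n : ℤ) (by omega)
    have hczn1 : esymZ n ((n : ℤ) - 1) (Function.update (Function.update lam j 0) i 0) = 0 :=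
      SAux.esymZ_upd2_zero lam j i hji ((n : ℤ) - 1) (by omega)
    have hSj : ∀ m : ℤ, esymZ n m (Function.update lam j 0)
        = esymZ n m (Function.update (Function.update lam j 0) i 0)
          + lam i * esymZ n (m - 1) (Function.update (Function.update lam j 0) i 0) := by
      intro m
      have h := SAux.esymZ_self (Function.update lam j 0) i m
      rwa [Function.update_of_ne hij 0 lam] at h
    have hSlam : ∀ m : ℤ, esymZ n m lam
        = esymZ n m (Function.update (Function.update lam j 0) i 0)
          + lam i * esymZ n (m - 1) (Function.update (Function.update lam j 0) i 0)
          + lam j * (esymZ n (m - 1) (Function.update (Function.update lam j 0) i 0)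
            + lam i * esymZ n (m - 1 - 1) (Function.update (Function.update lam j 0) i 0)) := by
      intro m
      rw [SAux.esymZ_self lam j m, hSj m, hSj (m - 1)]
    have hSn2 : esymZ n (n : ℤ) lam
        = lam i * lam j * esymZ n ((n : ℤ) - 2)
            (Function.update (Function.update lam j 0) i 0) := by
      rw [hSlam (n : ℤ), e2, hczn, hczn1]
      ring
    have hd2ne : esymZ n ((n : ℤ) - 2) (Function.update (Function.update lam j 0) i 0) ≠ 0 := by
      intro h0; apply hSnne; rw [hSn2, h0, mul_zero]
    set c0 := esymZ n ((n : ℤ) - (k : ℤ)) (Function.update (Function.update lam j 0) i 0) with hc0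
    set c1 := esymZ n ((n : ℤ) - (k : ℤ) - 1) (Function.update (Function.update lam j 0) i 0)
      with hc1
    set cm2 := esymZ n ((n : ℤ) - (k : ℤ) - 2) (Function.update (Function.update lam j 0) i 0)
      with hcm2
    set d2 := esymZ n ((n : ℤ) - 2) (Function.update (Function.update lam j 0) i 0) with hd2
    have houter : ∀ t : ℝ, lam i + t ≠ 0 →
        pd n (FinvR n k) j j (Matrix.diagonal lam + t • Matrix.single i i 1)
          = (((c1 + lam i * cm2) + t * cm2) * ((lam i * (lam j * d2)) + t * (lam j * d2))
              - ((c0 + lam i * c1 + lam j * c1 + lam i * (lam j * cm2)) + t * (c1 + lam j * cm2))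
                * ((lam i * d2) + t * d2))
            / ((lam i * (lam j * d2)) + t * (lam j * d2)) ^ 2 := by
      intro t ht
      have hdtj : Function.update lam i (lam i + t) j = lam j :=
        Function.update_of_ne hji _ lam
      have hcomm : Function.update (Function.update lam i (lam i + t)) j 0
          = Function.update (Function.update lam j 0) i (lam i + t) :=
        Function.update_comm hij (lam i + t) 0 lam
      refine SAux.pd_eq_of_rat (FinvR n k) j j _ _ _ _ _ ?_ ?_
      · show (lam i * (lam j * d2)) + t * (lam j * d2) ≠ 0
        have hre : (lam i * (lam j * d2)) + t * (lam j * d2) = (lam i + t) * (lam j * d2) := by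
          ring
        rw [hre]
        exact mul_ne_zero ht (mul_ne_zero (hlam j) hd2ne)
      · intro u
        rw [SAux.diag_add_std lam i t, SAux.diag_add_std _ j u]
        unfold FinvR
        rw [SAux.SmatR_eq_esymZ _ _ (SAux.charpoly_diag _) _,
          SAux.SmatR_eq_esymZ _ _ (SAux.charpoly_diag _) _,
          SAux.esymZ_update (Function.update lam i (lam i + t)) j
            (Function.update lam i (lam i + t) j + u) ((n : ℤ) - k),
          SAux.esymZ_update (Function.update lam i (lam i + t)) j
            (Function.update lam i (lam i + t) j + u) (n : ℤ),
          hcomm, hdtj]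
        simp only [SAux.esymZ_update (Function.update lam j 0) i (lam i + t)]
        rw [e1, e2, hczn, hczn1, ← hc0, ← hc1, ← hcm2, ← hd2]
        congr 1 <;> ring
    have hev : ∀ᶠ t : ℝ in nhds 0, lam i + t ≠ 0 := by
      have h1 : ∀ᶠ t : ℝ in nhds 0, t ≠ -lam i :=
        eventually_ne_nhds (fun h0 : (0 : ℝ) = -lam i => hlam i (by linarith))
      filter_upwards [h1] with t ht h0
      exact ht (by linarith)
    have hpd2 : pd2 n (FinvR n k) i i j j (Matrix.diagonal lam)
        = deriv (fun t : ℝ => pd n (FinvR n k) j j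
            (Matrix.diagonal lam + t • Matrix.single i i 1)) 0 := rfl
    rw [hpd2]
    have heq : (fun t : ℝ => pd n (FinvR n k) j j
        (Matrix.diagonal lam + t • Matrix.single i i 1))
        =ᶠ[nhds (0 : ℝ)] (fun t : ℝ =>
          (((c1 + lam i * cm2) + t * cm2) * ((lam i * (lam j * d2)) + t * (lam j * d2))
              - ((c0 + lam i * c1 + lam j * c1 + lam i * (lam j * cm2)) + t * (c1 + lam j * cm2))
                * ((lam i * d2) + t * d2))
            / ((lam i * (lam j * d2)) + t * (lam j * d2)) ^ 2) := by
      filter_upwards [hev] with t ht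
      exact houter t ht
    rw [heq.deriv_eq,
      SAux.deriv_bilin_div _ _ _ _ _ _ _ _ _ _
        (mul_ne_zero (hlam i) (mul_ne_zero (hlam j) hd2ne))]
    have hgc : Function.update (Function.update lam i 0) j 0
        = Function.update (Function.update lam j 0) i 0 :=
      Function.update_comm hij 0 0 lam
    rw [hgc, ← hc0, hSn2]
    field_simp [hlam i, hlam j, hd2ne]
    ring
  -- ∂ij ∂ji
  · intro i j hij
    have hji : j ≠ i := Ne.symm hij
    have e1 : (n : ℤ) - (k : ℤ) - 1 - 1 = (n : ℤ) - (k : ℤ) - 2 := by ring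
    have e2 : (n : ℤ) - 1 - 1 = (n : ℤ) - 2 := by ring
    have hczn : esymZ n (n : ℤ) (Function.update (Function.update lam i 0) j 0) = 0 :=
      SAux.esymZ_upd2_zero lam i j hij (n : ℤ) (by omega)
    have hczn1 : esymZ n ((n : ℤ) - 1) (Function.update (Function.update lam i 0) j 0) = 0 :=
      SAux.esymZ_upd2_zero lam i j hij ((n : ℤ) - 1) (by omega)
    have hSi : ∀ m : ℤ, esymZ n m (Function.update lam i 0)
        = esymZ n m (Function.update (Function.update lam i 0) j 0)
          + lam j * esymZ n (m - 1) (Function.update (Function.update lam i 0) j 0) := by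
      intro m
      have h := SAux.esymZ_self (Function.update lam i 0) j m
      rwa [Function.update_of_ne hji 0 lam] at h
    have hSlam : ∀ m : ℤ, esymZ n m lam
        = esymZ n m (Function.update (Function.update lam i 0) j 0)
          + lam j * esymZ n (m - 1) (Function.update (Function.update lam i 0) j 0)
          + lam i * (esymZ n (m - 1) (Function.update (Function.update lam i 0) j 0)
            + lam j * esymZ n (m - 1 - 1) (Function.update (Function.update lam i 0) j 0)) := by
      intro m
      rw [SAux.esymZ_self lam i m, hSi m, hSi (m - 1)]
    have hSn2 : esymZ n (n : ℤ) lam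
        = lam i * lam j * esymZ n ((n : ℤ) - 2)
            (Function.update (Function.update lam i 0) j 0) := by
      rw [hSlam (n : ℤ), e2, hczn, hczn1]
      ring
    have hd2ne : esymZ n ((n : ℤ) - 2) (Function.update (Function.update lam i 0) j 0) ≠ 0 := by
      intro h0; apply hSnne; rw [hSn2, h0, mul_zero]
    have hfun : ∀ t : ℝ,
        pd n (FinvR n k) j i (Matrix.diagonal lam + t • Matrix.single i j 1)
          = ((-(t * esymZ n ((n : ℤ) - k - 2) (Function.update (Function.update lam i 0) j 0)))
                * esymZ n (n : ℤ) lam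
              - esymZ n ((n : ℤ) - k) lam
                * (-(t * esymZ n ((n : ℤ) - 2) (Function.update (Function.update lam i 0) j 0))))
            / esymZ n (n : ℤ) lam ^ 2 := by
      intro t
      refine SAux.pd_eq_of_rat (FinvR n k) j i _ _ _ _ _ hSnne ?_
      intro u
      unfold FinvR
      rw [SAux.SmatR_pair _ lam i j hij (t * u) (SAux.charpoly_cycle lam i j hij t u) _ hmle,
        SAux.SmatR_pair _ lam i j hij (t * u) (SAux.charpoly_cycle lam i j hij t u) _
          (le_refl _)]
      congr 1 <;> ring
    have hpd2 : pd2 n (FinvR n k) i j j i (Matrix.diagonal lam)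
        = deriv (fun t : ℝ => pd n (FinvR n k) j i
            (Matrix.diagonal lam + t • Matrix.single i j 1)) 0 := rfl
    rw [hpd2]
    have heq : (fun t : ℝ => pd n (FinvR n k) j i
        (Matrix.diagonal lam + t • Matrix.single i j 1))
        = fun t : ℝ => t *
            ((esymZ n ((n : ℤ) - k) lam
                * esymZ n ((n : ℤ) - 2) (Function.update (Function.update lam i 0) j 0)
              - esymZ n ((n : ℤ) - k - 2) (Function.update (Function.update lam i 0) j 0)
                * esymZ n (n : ℤ) lam) / esymZ n (n : ℤ) lam ^ 2) := by
      funext t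
      rw [hfun t]
      ring
    rw [heq]
    have hder : deriv (fun t : ℝ => t *
        ((esymZ n ((n : ℤ) - k) lam
            * esymZ n ((n : ℤ) - 2) (Function.update (Function.update lam i 0) j 0)
          - esymZ n ((n : ℤ) - k - 2) (Function.update (Function.update lam i 0) j 0)
            * esymZ n (n : ℤ) lam) / esymZ n (n : ℤ) lam ^ 2)) 0
        = (esymZ n ((n : ℤ) - k) lam
            * esymZ n ((n : ℤ) - 2) (Function.update (Function.update lam i 0) j 0)
          - esymZ n ((n : ℤ) - k - 2) (Function.update (Function.update lam i 0) j 0)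
            * esymZ n (n : ℤ) lam) / esymZ n (n : ℤ) lam ^ 2 := by
      simpa using ((hasDerivAt_id (0 : ℝ)).mul_const
        ((esymZ n ((n : ℤ) - k) lam
            * esymZ n ((n : ℤ) - 2) (Function.update (Function.update lam i 0) j 0)
          - esymZ n ((n : ℤ) - k - 2) (Function.update (Function.update lam i 0) j 0)
            * esymZ n (n : ℤ) lam) / esymZ n (n : ℤ) lam ^ 2)).deriv
    rw [hder, hSi ((n : ℤ) - k), hSlam ((n : ℤ) - k), hSn2, e1]
    field_simp [hlam i, hlam j, hd2ne]
    ring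
  -- ∂ii ∂ii
  · intro i
    have hSin : esymZ n (n : ℤ) (Function.update lam i 0) = 0 :=
      SAux.esymZ_upd1_zero lam i (n : ℤ) (by omega)
    have hSneq : esymZ n (n : ℤ) lam
        = lam i * esymZ n ((n : ℤ) - 1) (Function.update lam i 0) := by
      rw [SAux.esymZ_self lam i (n : ℤ), hSin]
      ring
    have hdn1ne : esymZ n ((n : ℤ) - 1) (Function.update lam i 0) ≠ 0 := by
      intro h0; apply hSnne; rw [hSneq, h0, mul_zero]
    set s0 := esymZ n ((n : ℤ) - (k : ℤ)) (Function.update lam i 0) with hs0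
    set s1 := esymZ n ((n : ℤ) - (k : ℤ) - 1) (Function.update lam i 0) with hs1
    set dn1 := esymZ n ((n : ℤ) - 1) (Function.update lam i 0) with hdn1
    have houter : ∀ t : ℝ, lam i + t ≠ 0 →
        pd n (FinvR n k) i i (Matrix.diagonal lam + t • Matrix.single i i 1)
          = ((s1 + t * 0) * (lam i * dn1 + t * dn1)
              - ((s0 + lam i * s1) + t * s1) * (dn1 + t * 0))
            / (lam i * dn1 + t * dn1) ^ 2 := by
      intro t ht
      refine SAux.pd_eq_of_rat (FinvR n k) i i _ _ _ _ _ ?_ ?_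
      · show lam i * dn1 + t * dn1 ≠ 0
        have hre : lam i * dn1 + t * dn1 = (lam i + t) * dn1 := by ring
        rw [hre]
        exact mul_ne_zero ht hdn1ne
      · intro u
        rw [SAux.diag_add_std lam i t, SAux.diag_add_std _ i u, Function.update_self,
          Function.update_idem]
        unfold FinvR
        rw [SAux.SmatR_eq_esymZ _ _ (SAux.charpoly_diag _) _,
          SAux.SmatR_eq_esymZ _ _ (SAux.charpoly_diag _) _,
          SAux.esymZ_update lam i (lam i + t + u) ((n : ℤ) - k),
          SAux.esymZ_update lam i (lam i + t + u) (n : ℤ), hSin, ← hs0, ← hs1, ← hdn1]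
        congr 1 <;> ring
    have hev : ∀ᶠ t : ℝ in nhds 0, lam i + t ≠ 0 := by
      have h1 : ∀ᶠ t : ℝ in nhds 0, t ≠ -lam i :=
        eventually_ne_nhds (fun h0 : (0 : ℝ) = -lam i => hlam i (by linarith))
      filter_upwards [h1] with t ht h0
      exact ht (by linarith)
    have hpd2 : pd2 n (FinvR n k) i i i i (Matrix.diagonal lam)
        = deriv (fun t : ℝ => pd n (FinvR n k) i i
            (Matrix.diagonal lam + t • Matrix.single i i 1)) 0 := rfl
    rw [hpd2]
    have heq : (fun t : ℝ => pd n (FinvR n k) i i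
        (Matrix.diagonal lam + t • Matrix.single i i 1))
        =ᶠ[nhds (0 : ℝ)] (fun t : ℝ =>
          ((s1 + t * 0) * (lam i * dn1 + t * dn1)
              - ((s0 + lam i * s1) + t * s1) * (dn1 + t * 0))
            / (lam i * dn1 + t * dn1) ^ 2) := by
      filter_upwards [hev] with t ht
      exact houter t ht
    rw [heq.deriv_eq,
      SAux.deriv_bilin_div _ _ _ _ _ _ _ _ _ _ (mul_ne_zero (hlam i) hdn1ne), hSneq]
    field_simp [hlam i, hdn1ne]
    ring
  -- other second derivatives vanish
  · intro i j r s h1 h2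
    by_cases hij : i = j
    · subst hij
      have hrs : r ≠ s := fun h => h1 ⟨rfl, h⟩
      have hpd2 : pd2 n (FinvR n k) i i r s (Matrix.diagonal lam)
          = deriv (fun t : ℝ => pd n (FinvR n k) r s
              (Matrix.diagonal lam + t • Matrix.single i i 1)) 0 := rfl
      rw [hpd2]
      have hz : ∀ t : ℝ, pd n (FinvR n k) r s
          (Matrix.diagonal lam + t • Matrix.single i i 1) = 0 := by
        intro t
        refine SAux.pd_eq_const (FinvR n k) r s _
          (esymZ n ((n : ℤ) - k) (Function.update lam i (lam i + t))
            / esymZ n (n : ℤ) (Function.update lam i (lam i + t))) ?_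
        intro u
        rw [SAux.diag_add_std lam i t]
        unfold FinvR
        rw [SAux.SmatR_eq_esymZ _ _ (SAux.charpoly_one_offdiag _ r s hrs u) _,
          SAux.SmatR_eq_esymZ _ _ (SAux.charpoly_one_offdiag _ r s hrs u) _]
      simp only [hz]
      exact deriv_const 0 0
    · by_cases hrs : r = s
      · subst hrs
        have hpd2 : pd2 n (FinvR n k) i j r r (Matrix.diagonal lam)
            = deriv (fun t : ℝ => pd n (FinvR n k) r r
                (Matrix.diagonal lam + t • Matrix.single i j 1)) 0 := rfl
        rw [hpd2]
        have hz : ∀ t : ℝ, pd n (FinvR n k) r r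
            (Matrix.diagonal lam + t • Matrix.single i j 1)
            = pd n (FinvR n k) r r
              (Matrix.diagonal lam + (0 : ℝ) • Matrix.single i j 1) := by
          intro t
          unfold pd
          congr 1
          funext u
          have hre : ∀ w : ℝ,
              (Matrix.diagonal lam + w • Matrix.single i j 1)
                + u • Matrix.single r r 1
              = Matrix.diagonal (Function.update lam r (lam r + u))
                + w • Matrix.single i j 1 := by
            intro w
            rw [add_right_comm, SAux.diag_add_std lam r u]
          rw [hre t, hre 0]
          unfold FinvR
          rw [SAux.SmatR_eq_esymZ _ _ (SAux.charpoly_one_offdiag _ i j hij t) _,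
            SAux.SmatR_eq_esymZ _ _ (SAux.charpoly_one_offdiag _ i j hij t) _,
            SAux.SmatR_eq_esymZ _ _ (SAux.charpoly_one_offdiag _ i j hij 0) _,
            SAux.SmatR_eq_esymZ _ _ (SAux.charpoly_one_offdiag _ i j hij 0) _]
        simp only [hz]
        exact deriv_const 0 _
      · have hne : ¬(r = j ∧ s = i) := fun hh => h2 ⟨hij, hh.1, hh.2⟩
        have hpd2 : pd2 n (FinvR n k) i j r s (Matrix.diagonal lam)
            = deriv (fun t : ℝ => pd n (FinvR n k) r s
                (Matrix.diagonal lam + t • Matrix.single i j 1)) 0 := rfl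
        rw [hpd2]
        have hz : ∀ t : ℝ, pd n (FinvR n k) r s
            (Matrix.diagonal lam + t • Matrix.single i j 1) = 0 := by
          intro t
          refine SAux.pd_eq_const (FinvR n k) r s _
            (esymZ n ((n : ℤ) - k) lam / esymZ n (n : ℤ) lam) ?_
          intro u
          unfold FinvR
          rw [SAux.SmatR_eq_esymZ _ _
              (SAux.charpoly_two_offdiag lam i j r s hij hrs hne t u) _,
            SAux.SmatR_eq_esymZ _ _
              (SAux.charpoly_two_offdiag lam i j r s hij hrs hne t u) _]
        simp only [hz]
        exact deriv_const 0 0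
end

section
/- Fix 0 ≤ k ≤ n and λ_1,…,λ_n > 0. For an (n−k)-element subset I ⊆ {1,…,n} write λ_I = Π_{i∈I} λ_i and let E_I be the n×n matrix with (E_I)_{ij} = 1 if both i ∉ I and j ∉ I, and 0 otherwise. Then the n×n matrix M with entries M_{ij} = S_{n−k;i,j}(λ) + δ_{ij} S_{n−k;i}(λ) satisfies M = Σ_{|I| = n−k} λ_I E_I; in particular M is positive semidefinite. -/
/-- `S_{k;i}(λ)`: the `k`-th elementary symmetric polynomial after setting `λ_i = 0`. -/
noncomputable def esymZdel1 (n : ℕ) (k : ℤ) (lam : Fin n → ℝ) (i : Fin n) : ℝ :=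
  esymZ n k (Function.update lam i 0)

/-- `S_{k;i,j}(λ)`: the `k`-th elementary symmetric polynomial after setting `λ_i = λ_j = 0`,
taken to be `0` when the indices `i, j` are not distinct. -/
noncomputable def esymZdel2 (n : ℕ) (k : ℤ) (lam : Fin n → ℝ) (i j : Fin n) : ℝ :=
  if i = j then 0 else esymZ n k (Function.update (Function.update lam i 0) j 0)

/-- The matrix `E_I` for `I ⊆ {1,…,n}`: `(E_I)_{ij} = 1` if `i ∉ I` and `j ∉ I`, else `0`. -/
def EI (n : ℕ) (I : Finset (Fin n)) : Matrix (Fin n) (Fin n) ℝ :=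
  Matrix.of fun i j => if i ∉ I ∧ j ∉ I then 1 else 0

open Finset Matrix
lemma sum_prod_zero_on {N m : ℕ} (f g : Fin N → ℝ) (P : Fin N → Prop) [DecidablePred P]
    (h0 : ∀ j, ¬ P j → g j = 0) (h1 : ∀ j, P j → g j = f j) :
    ∑ t ∈ Finset.powersetCard m Finset.univ, ∏ j ∈ t, g j
      = ∑ t ∈ (Finset.powersetCard m Finset.univ).filter (fun t => ∀ j ∈ t, P j),
          ∏ j ∈ t, f j := by
  rw [← Finset.sum_filter_add_sum_filter_not (Finset.powersetCard m Finset.univ)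
    (fun t => ∀ j ∈ t, P j) (fun t => ∏ j ∈ t, g j)]
  have h2 : ∑ t ∈ (Finset.powersetCard m Finset.univ).filter (fun t => ¬ ∀ j ∈ t, P j),
      ∏ j ∈ t, g j = 0 := by
    apply Finset.sum_eq_zero
    intro t ht
    simp only [Finset.mem_filter, not_forall] at ht
    obtain ⟨j, hj, hPj⟩ := ht.2
    exact Finset.prod_eq_zero hj (h0 j hPj)
  rw [h2, add_zero]
  apply Finset.sum_congr rfl
  intro t ht
  simp only [Finset.mem_filter] at ht
  exact Finset.prod_congr rfl fun j hj => h1 j (ht.2 j hj)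

lemma EIps (n : ℕ) (I : Finset (Fin n)) (c : ℝ) (hc : 0 ≤ c) :
    (c • EI n I).PosSemidef := by
  rw [Matrix.posSemidef_iff_dotProduct_mulVec]
  constructor
  · ext i j
    simp [EI, Matrix.IsHermitian, Matrix.conjTranspose_apply, and_comm]
  · intro x
    have h1 : ∀ i : Fin n, (EI n I *ᵥ x) i
        = if i ∉ I then ∑ j ∈ Iᶜ, x j else 0 := by
      intro i
      simp only [EI, Matrix.mulVec, Matrix.of_apply, dotProduct]
      by_cases hi : i ∈ I
      · simp [hi]
      · simp only [hi, not_false_iff, true_and, if_true]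
        have hfil : Finset.univ.filter (· ∉ I) = Iᶜ := by ext j; simp
        simp_rw [ite_mul, zero_mul, one_mul]
        rw [← Finset.sum_filter, hfil]
    have h2 : star x ⬝ᵥ ((c • EI n I) *ᵥ x) = c * (∑ j ∈ Iᶜ, x j)^2 := by
      rw [Matrix.smul_mulVec, dotProduct_smul]
      simp only [smul_eq_mul]
      congr 1
      simp only [dotProduct, h1, Pi.star_apply, star_trivial]
      have hfil : Finset.univ.filter (· ∉ I) = Iᶜ := by ext j; simp
      simp_rw [mul_ite, mul_zero]
      rw [← Finset.sum_filter, hfil, sq, ← Finset.sum_mul]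
    rw [h2]
    positivity


set_option maxHeartbeats 1000000 in
/-- The matrix `M` with `M_{ij} = S_{n-k;i,j}(λ) + δ_{ij} S_{n-k;i}(λ)` satisfies
`M = Σ_{|I| = n-k} λ_I E_I`, where `λ_I = Π_{i ∈ I} λ_i`; in particular `M` is positive
semidefinite. -/
theorem statement3 (n k : ℕ) (hk : k ≤ n) (lam : Fin n → ℝ) (hlam : ∀ i, 0 < lam i) :
    (Matrix.of fun i j : Fin n =>
        esymZdel2 n ((n : ℤ) - k) lam i j + if i = j then esymZdel1 n ((n : ℤ) - k) lam i else 0)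
      = ∑ I ∈ Finset.powersetCard (n - k) (Finset.univ : Finset (Fin n)),
          (∏ i ∈ I, lam i) • EI n I ∧
    (Matrix.of fun i j : Fin n =>
        esymZdel2 n ((n : ℤ) - k) lam i j +
          if i = j then esymZdel1 n ((n : ℤ) - k) lam i else 0).PosSemidef := by
  have hnn : (0:ℤ) ≤ (n : ℤ) - k := by omega
  have htn : ((n : ℤ) - k).toNat = n - k := by omega
  have heq : (Matrix.of fun i j : Fin n =>
        esymZdel2 n ((n : ℤ) - k) lam i j + if i = j then esymZdel1 n ((n : ℤ) - k) lam i else 0)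
      = ∑ I ∈ Finset.powersetCard (n - k) (Finset.univ : Finset (Fin n)),
          (∏ i ∈ I, lam i) • EI n I := by
    ext i j
    rw [Matrix.sum_apply]
    simp only [Matrix.smul_apply, EI, Matrix.of_apply, smul_eq_mul, mul_ite, mul_one, mul_zero]
    rw [← Finset.sum_filter]
    by_cases hij : i = j
    · subst hij
      simp only [esymZdel2, esymZdel1, esymZ, if_pos hnn, htn, if_true, ite_self]
      rw [zero_add]
      have h0 : ∀ l, ¬ (l ≠ i) → Function.update lam i 0 l = 0 := by
        intro l hl
        have hli : l = i := by tauto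
        subst hli; simp
      have h1 : ∀ l, l ≠ i → Function.update lam i 0 l = lam l := by
        intro l hl; exact Function.update_of_ne hl _ _
      rw [sum_prod_zero_on lam (Function.update lam i 0) (fun l => l ≠ i) h0 h1]
      apply Finset.sum_congr _ (fun _ _ => rfl)
      apply Finset.filter_congr
      intro t _
      constructor
      · intro h; exact ⟨fun hi => h i hi rfl, fun hi => h i hi rfl⟩
      · rintro ⟨hi, _⟩ l hl e; subst e; exact hi hl
    · simp only [esymZdel2, esymZdel1, esymZ, if_neg hij, if_pos hnn, htn, add_zero]
      have h0 : ∀ l, ¬ (l ≠ i ∧ l ≠ j) →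
          Function.update (Function.update lam i 0) j 0 l = 0 := by
        intro l hl
        simp only [not_and, not_not] at hl
        by_cases hlj : l = j
        · subst hlj; simp
        · have hli : l = i := by tauto
          subst hli
          rw [Function.update_of_ne hlj, Function.update_self]
      have h1 : ∀ l, (l ≠ i ∧ l ≠ j) →
          Function.update (Function.update lam i 0) j 0 l = lam l := by
        rintro l ⟨ha, hb⟩
        rw [Function.update_of_ne hb, Function.update_of_ne ha]
      rw [sum_prod_zero_on lam (Function.update (Function.update lam i 0) j 0)
        (fun l => l ≠ i ∧ l ≠ j) h0 h1]
      apply Finset.sum_congr _ (fun _ _ => rfl)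
      apply Finset.filter_congr
      intro t _
      constructor
      · intro h
        exact ⟨fun hi => (h i hi).1 rfl, fun hj => (h j hj).2 rfl⟩
      · rintro ⟨hi, hj⟩ l hl
        exact ⟨fun e => hi (e ▸ hl), fun e => hj (e ▸ hl)⟩
  refine ⟨heq, ?_⟩
  rw [heq]
  apply Finset.sum_induction _ _ (fun a b ha hb => ha.add hb) Matrix.PosSemidef.zero
  intro I _
  exact EIps n I _ (Finset.prod_nonneg fun i _ => (hlam i).le)
end

section
/- Let A and B be real symmetric positive definite n×n matrices with tr(A^{−1}B) ≤ 1. Then A − B is positive semidefinite; if moreover tr(A^{−1}B) < 1, then A − B is positive definite. -/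
open Matrix

/-- Conjugation `Bᴴ * M * B` of a positive definite matrix by an invertible matrix is
positive definite. -/
lemma aux_conjT_posDef {n : ℕ} {M : Matrix (Fin n) (Fin n) ℝ} (hM : M.PosDef)
    (B : Matrix (Fin n) (Fin n) ℝ) (hB : IsUnit B) : (Bᴴ * M * B).PosDef := by
  refine Matrix.PosDef.of_dotProduct_mulVec_pos (Matrix.isHermitian_conjTranspose_mul_mul B hM.1) fun x hx => ?_
  have hinj := Matrix.mulVec_injective_iff_isUnit.mpr hB
  have hx' : B *ᵥ x ≠ 0 := (hinj.ne_iff' (Matrix.mulVec_zero _)).2 hx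
  simpa only [star_mulVec, dotProduct_mulVec, vecMul_vecMul] using hM.dotProduct_mulVec_pos hx'

lemma aux_mul_posDef {n : ℕ} {M : Matrix (Fin n) (Fin n) ℝ} (hM : M.PosDef)
    (B : Matrix (Fin n) (Fin n) ℝ) (hB : IsUnit B) : (B * M * Bᴴ).PosDef := by
  have hBH : IsUnit Bᴴ := by
    rw [Matrix.isUnit_iff_isUnit_det, Matrix.det_conjTranspose, isUnit_star,
      ← Matrix.isUnit_iff_isUnit_det]
    exact hB
  simpa only [conjTranspose_conjTranspose] using aux_conjT_posDef hM Bᴴ hBH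

lemma aux_one_sub {n : ℕ} {C : Matrix (Fin n) (Fin n) ℝ} (hC : C.PosDef) :
    (C.trace ≤ 1 → ((1 : Matrix (Fin n) (Fin n) ℝ) - C).PosSemidef) ∧
    (C.trace < 1 → ((1 : Matrix (Fin n) (Fin n) ℝ) - C).PosDef) := by
  classical
  set U : Matrix (Fin n) (Fin n) ℝ := (hC.1.eigenvectorUnitary : Matrix (Fin n) (Fin n) ℝ) with hUdef
  have hU1 : U * star U = 1 := mem_unitaryGroup_iff.mp hC.1.eigenvectorUnitary.2
  have hU1' : star U * U = 1 := mem_unitaryGroup_iff'.mp hC.1.eigenvectorUnitary.2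
  have hUunit : IsUnit U := ⟨⟨U, star U, hU1, hU1'⟩, rfl⟩
  have hsd := hC.1.spectral_theorem
  rw [Unitary.conjStarAlgAut_apply, ← hUdef] at hsd
  have htr : C.trace = ∑ i, hC.1.eigenvalues i := by
    nth_rewrite 1 [hsd]
    rw [trace_mul_cycle, hU1', one_mul]
    simp [trace_diagonal]
  have hev : ∀ i, hC.1.eigenvalues i ≤ C.trace := fun i => by
    rw [htr]
    exact Finset.single_le_sum (fun j _ => (hC.eigenvalues_pos j).le) (Finset.mem_univ i)
  have hdecomp : (1 : Matrix (Fin n) (Fin n) ℝ) - C =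
      U * diagonal (fun i => 1 - hC.1.eigenvalues i) * star U := by
    have hd : diagonal (fun i => (1:ℝ) - hC.1.eigenvalues i)
        = 1 - diagonal (RCLike.ofReal ∘ hC.1.eigenvalues) := by
      rw [← diagonal_one, diagonal_sub]
      simp [Function.comp]
    rw [hd, mul_sub, sub_mul, mul_one, hU1, ← hsd]
  constructor
  · intro hle
    have hdiag : (diagonal fun i => (1:ℝ) - hC.1.eigenvalues i).PosSemidef :=
      posSemidef_diagonal_iff.mpr fun i => by linarith [hev i]
    rw [hdecomp, star_eq_conjTranspose]
    exact hdiag.mul_mul_conjTranspose_same U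
  · intro hlt
    have hdiag : (diagonal fun i => (1:ℝ) - hC.1.eigenvalues i).PosDef :=
      posDef_diagonal_iff.mpr fun i => by linarith [hev i]
    rw [hdecomp, star_eq_conjTranspose]
    exact aux_mul_posDef hdiag U hUunit

/-- Let `A` and `B` be real symmetric positive definite `n × n` matrices with
`tr(A⁻¹ B) ≤ 1`. Then `A - B` is positive semidefinite; if moreover `tr(A⁻¹ B) < 1`, then
`A - B` is positive definite. -/
theorem statement11 (n : ℕ) (A B : Matrix (Fin n) (Fin n) ℝ)
    (hA : A.PosDef) (hB : B.PosDef) (h : (A⁻¹ * B).trace ≤ 1) :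
    (A - B).PosSemidef ∧ ((A⁻¹ * B).trace < 1 → (A - B).PosDef) := by
  classical
  set S : Matrix (Fin n) (Fin n) ℝ := (open scoped MatrixOrder Matrix.Norms.L2Operator in CFC.sqrt A) with hSdef
  have hSps : S.PosSemidef := by
    open scoped MatrixOrder Matrix.Norms.L2Operator in exact (CFC.sqrt_nonneg A).posSemidef
  have hSS : S * S = A := by
    open scoped MatrixOrder Matrix.Norms.L2Operator in exact CFC.sqrt_mul_sqrt_self A hA.posSemidef.nonneg
  have hSunit : IsUnit S := by
    rw [Matrix.isUnit_iff_isUnit_det]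
    have : S.det * S.det = A.det := by rw [← det_mul, hSS]
    have hd : A.det ≠ 0 := hA.det_pos.ne'
    exact isUnit_iff_ne_zero.mpr fun h0 => hd (by rw [← this, h0, mul_zero])
  have hSinv : IsUnit S⁻¹ := (Matrix.isUnit_nonsing_inv_iff).mpr hSunit
  have hSiH : (S⁻¹).IsHermitian := hSps.1.inv
  set C : Matrix (Fin n) (Fin n) ℝ := S⁻¹ * B * S⁻¹ with hCdef
  have hCpd : C.PosDef := by
    have := aux_conjT_posDef hB S⁻¹ hSinv
    rwa [hSiH.eq] at this
  have hmulinv : S * S⁻¹ = 1 := mul_nonsing_inv S (isUnit_iff_isUnit_det S |>.mp hSunit)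
  have hinvmul : S⁻¹ * S = 1 := nonsing_inv_mul S (isUnit_iff_isUnit_det S |>.mp hSunit)
  have htr : C.trace = (A⁻¹ * B).trace := by
    rw [hCdef, trace_mul_comm, ← mul_assoc, ← Matrix.mul_inv_rev, hSS]
  have hB' : S * (S⁻¹ * B * S⁻¹) * S = B := by
    rw [show S * (S⁻¹ * B * S⁻¹) * S = (S * S⁻¹) * B * (S⁻¹ * S) by noncomm_ring,
      hmulinv, hinvmul, one_mul, mul_one]
  have hAB : A - B = S * ((1 : Matrix (Fin n) (Fin n) ℝ) - C) * S := by
    rw [hCdef, mul_sub, sub_mul, mul_one, hSS, hB']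
  have key := aux_one_sub hCpd
  constructor
  · have h1 : ((1 : Matrix (Fin n) (Fin n) ℝ) - C).PosSemidef := key.1 (htr ▸ h)
    have hconj := h1.mul_mul_conjTranspose_same S
    rw [hSps.1.eq] at hconj
    rwa [hAB]
  · intro hlt
    have h1 : ((1 : Matrix (Fin n) (Fin n) ℝ) - C).PosDef := key.2 (htr ▸ hlt)
    have hconj := aux_mul_posDef h1 S hSunit
    rw [hSps.1.eq] at hconj
    rwa [hAB]
end
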